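/- arXiv:2307.16677 — 4 statements merged into one kernel-verified Lean document; each statement's English description precedes it below -/
import Mathlib

section
/- Let A be a d×d real matrix that is positively stable. Then exp(-tA) converges to the zero matrix as t → ∞. -/
open Matrix NormedSpace

attribute [local instance] Matrix.linftyOpNormedRing Matrix.linftyOpNormedAlgebra

open Filter Finset Topology

attribute [local instance] Matrix.linftyOpNormedAddCommGroup Matrix.linftyOpNormedSpace

private lemma scalar_tendsto {a : ℝ} (ha : 0 < a) (n : ℕ) :
    Tendsto (fun t : ℝ => Real.exp (-(t * a)) * t ^ n) atTop (𝓝 0) := by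
  have h1 : Tendsto (fun t : ℝ => t * a) atTop atTop :=
    Tendsto.atTop_mul_const ha tendsto_id
  have h2 := (Real.tendsto_pow_mul_exp_neg_atTop_nhds_zero n).comp h1
  have h3 : Tendsto (fun t : ℝ => a⁻¹ ^ n * ((t * a) ^ n * Real.exp (-(t * a)))) atTop
      (𝓝 (a⁻¹ ^ n * 0)) := h2.const_mul _
  rw [mul_zero] at h3
  refine h3.congr fun t => ?_
  rw [mul_pow]
  field_simp
  rw [mul_right_comm, ← mul_pow, one_div, inv_mul_cancel₀ ha.ne', one_pow, one_mul]

noncomputable def mulVecCLM {d : ℕ} (v : Fin d → ℂ) :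
    Matrix (Fin d) (Fin d) ℂ →L[ℂ] (Fin d → ℂ) :=
  LinearMap.toContinuousLinearMap
    { toFun := fun M => M *ᵥ v
      map_add' := fun M N => Matrix.add_mulVec M N v
      map_smul' := fun c M => Matrix.smul_mulVec c M v }

private lemma exp_mulVec {d : ℕ} (B : Matrix (Fin d) (Fin d) ℂ) (μ : ℂ) {k : ℕ}
    (w : Fin d → ℂ) (hk : ((B - μ • 1) ^ k) *ᵥ w = 0) (c : ℂ) :
    (exp (c • B)) *ᵥ w =
      ∑ n ∈ Finset.range k, (Complex.exp (c * μ) * (c ^ n * (n.factorial : ℂ)⁻¹)) •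
        (((B - μ • 1) ^ n) *ᵥ w) := by
  set N : Matrix (Fin d) (Fin d) ℂ := B - μ • 1 with hN
  have hBsplit : c • B = (c * μ) • (1 : Matrix (Fin d) (Fin d) ℂ) + c • N := by
    rw [hN]; module
  have hcomm : Commute ((c * μ) • (1 : Matrix (Fin d) (Fin d) ℂ)) (c • N) :=
    ((Commute.one_left N).smul_left _).smul_right _
  have h1 : exp ((c * μ) • (1 : Matrix (Fin d) (Fin d) ℂ)) =
      Complex.exp (c * μ) • (1 : Matrix (Fin d) (Fin d) ℂ) := by
    erw [← Algebra.algebraMap_eq_smul_one, ← algebraMap_exp_comm,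
      ← Complex.exp_eq_exp_ℂ, Algebra.algebraMap_eq_smul_one]
  have h2 : (exp (c • N)) *ᵥ w =
      ∑ n ∈ Finset.range k, ((c ^ n * (n.factorial : ℂ)⁻¹) • ((N ^ n) *ᵥ w)) := by
    have ht : (exp (c • N)) *ᵥ w = ∑' n : ℕ, ((n.factorial : ℂ))⁻¹ • ((c • N) ^ n *ᵥ w) := by
      have := (mulVecCLM w).map_tsum (expSeries_summable' (𝕂 := ℂ) (c • N))
      simpa [mulVecCLM, exp_eq_tsum ℂ] using this
    rw [ht]
    have hterm : ∀ n : ℕ, ((n.factorial : ℂ))⁻¹ • ((c • N) ^ n *ᵥ w)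
        = (c ^ n * (n.factorial : ℂ)⁻¹) • ((N ^ n) *ᵥ w) := by
      intro n
      rw [smul_pow, smul_mulVec, smul_smul, mul_comm]
    rw [tsum_eq_sum (s := Finset.range k)]
    · exact Finset.sum_congr rfl fun n _ => hterm n
    · intro n hn
      rw [hterm n]
      have hkn : k ≤ n := by simpa using hn
      have : (N ^ n) *ᵥ w = 0 := by
        rw [← Nat.sub_add_cancel hkn, pow_add, ← Matrix.mulVec_mulVec, hk, Matrix.mulVec_zero]
      rw [this, smul_zero]
  erw [hBsplit, exp_add_of_commute hcomm, h1, smul_mul_assoc, one_mul,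
    Matrix.smul_mulVec, h2, Finset.smul_sum]
  exact Finset.sum_congr rfl fun n _ => by rw [smul_smul]

private lemma vec_tendsto {d : ℕ} (B : Matrix (Fin d) (Fin d) ℂ)
    (hB : ∀ μ ∈ spectrum ℂ B, 0 < μ.re) (v : Fin d → ℂ) :
    Tendsto (fun t : ℝ => (exp ((-(t : ℂ)) • B)) *ᵥ v) atTop (𝓝 0) := by
  let S : Submodule ℂ (Fin d → ℂ) :=
    { carrier := {w | Tendsto (fun t : ℝ => (exp ((-(t : ℂ)) • B)) *ᵥ w) atTop (𝓝 0)}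
      add_mem' := by
        intro a b ha hb
        simpa [Matrix.mulVec_add] using ha.add hb
      zero_mem' := by
        simpa [Matrix.mulVec_zero] using (tendsto_const_nhds :
          Tendsto (fun _ : ℝ => (0 : Fin d → ℂ)) atTop (𝓝 0))
      smul_mem' := by
        intro c w hw
        simpa [Matrix.mulVec_smul] using hw.const_smul c }
  suffices h : v ∈ S from h
  set f : Module.End ℂ (Fin d → ℂ) := Matrix.toLinAlgEquiv' B with hf
  have htop : ⨆ μ : ℂ, f.maxGenEigenspace μ = ⊤ :=
    Module.End.iSup_maxGenEigenspace_eq_top f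
  have hle : ∀ μ : ℂ, f.maxGenEigenspace μ ≤ S := by
    intro μ w hw
    rw [Module.End.mem_maxGenEigenspace] at hw
    obtain ⟨k, hk⟩ := hw
    by_cases hw0 : w = 0
    · rw [hw0]; exact S.zero_mem
    -- translate to matrices
    have h0 : f - μ • 1 = Matrix.toLinAlgEquiv' (B - μ • 1) := by
      rw [map_sub, _root_.map_smul, _root_.map_one]
    have he : (f - μ • 1) ^ k = Matrix.toLinAlgEquiv' ((B - μ • 1) ^ k) := by
      rw [h0, ← map_pow]
    have hk' : ((B - μ • 1) ^ k) *ᵥ w = 0 := by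
      rw [he] at hk
      rwa [Matrix.toLinAlgEquiv'_apply] at hk
    -- μ is in the spectrum
    have hμ : 0 < μ.re := by
      apply hB
      rw [← AlgEquiv.spectrum_eq (Matrix.toLinAlgEquiv' (R := ℂ) (n := Fin d)) B]
      refine Module.End.HasEigenvalue.mem_spectrum ?_
      refine Module.End.hasEigenvalue_of_hasGenEigenvalue (k := k) ?_
      rw [Module.End.hasGenEigenvalue_iff, Submodule.ne_bot_iff]
      refine ⟨w, ?_, hw0⟩
      rw [Module.End.mem_genEigenspace_nat]
      rw [show Matrix.toLinAlgEquiv' B = f from rfl, he, LinearMap.mem_ker,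
        Matrix.toLinAlgEquiv'_apply]
      exact hk'
    -- the limit
    show Tendsto _ atTop (𝓝 0)
    have hrw : ∀ t : ℝ, (exp ((-(t : ℂ)) • B)) *ᵥ w =
        ∑ n ∈ Finset.range k, (Complex.exp ((-(t : ℂ)) * μ) *
          ((-(t : ℂ)) ^ n * (n.factorial : ℂ)⁻¹)) • (((B - μ • 1) ^ n) *ᵥ w) :=
      fun t => exp_mulVec B μ w hk' (-(t : ℂ))
    simp only [hrw]
    have hzero : (0 : Fin d → ℂ) =
        ∑ n ∈ Finset.range k, (0 : Fin d → ℂ) := by simp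
    rw [hzero]
    refine tendsto_finset_sum _ fun n _ => ?_
    have hg : Tendsto (fun t : ℝ => Complex.exp ((-(t : ℂ)) * μ) *
        ((-(t : ℂ)) ^ n * (n.factorial : ℂ)⁻¹)) atTop (𝓝 0) := by
      rw [tendsto_zero_iff_norm_tendsto_zero]
      have hbase : Tendsto (fun t : ℝ => Real.exp (-(t * μ.re)) * t ^ n *
          ((n.factorial : ℝ))⁻¹) atTop (𝓝 (0 * ((n.factorial : ℝ))⁻¹)) :=
        (scalar_tendsto hμ n).mul_const _
      rw [zero_mul] at hbase
      refine hbase.congr' ?_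
      filter_upwards [eventually_ge_atTop (0 : ℝ)] with t ht
      have h1 : ‖Complex.exp ((-(t : ℂ)) * μ)‖ = Real.exp (-(t * μ.re)) := by
        rw [Complex.norm_exp]
        congr 1
        simp [Complex.mul_re]
      have h2 : ‖(-(t : ℂ)) ^ n‖ = t ^ n := by
        rw [norm_pow, norm_neg, Complex.norm_real, Real.norm_eq_abs, abs_of_nonneg ht]
      have h3 : ‖((n.factorial : ℂ))⁻¹‖ = ((n.factorial : ℝ))⁻¹ := by
        rw [norm_inv, Complex.norm_natCast]
      rw [norm_mul, norm_mul, h1, h2, h3]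
      ring
    have := hg.smul_const ((((B - μ • 1) ^ n) *ᵥ w))
    simpa using this
  rw [← top_le_iff] at htop
  exact (htop.trans (iSup_le hle)) (Submodule.mem_top)

private lemma mat_tendsto {d : ℕ} (B : Matrix (Fin d) (Fin d) ℂ)
    (hB : ∀ μ ∈ spectrum ℂ B, 0 < μ.re) :
    Tendsto (fun t : ℝ => ‖exp ((-(t : ℂ)) • B)‖) atTop (𝓝 0) := by
  have hentry : ∀ i j : Fin d,
      Tendsto (fun t : ℝ => ‖(exp ((-(t : ℂ)) • B)) i j‖) atTop (𝓝 0) := by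
    intro i j
    have h := vec_tendsto B hB (Pi.single j 1)
    have h2 := (tendsto_pi_nhds.mp h) i
    simp only [Matrix.mulVec_single, mul_one, Pi.zero_apply] at h2
    simpa using h2.norm
  have hb : ∀ M : Matrix (Fin d) (Fin d) ℂ, ‖M‖ ≤ ∑ i, ∑ j, ‖M i j‖ := by
    intro M
    rw [Matrix.linfty_opNorm_def]
    have : ((Finset.univ : Finset (Fin d)).sup fun i => ∑ j, ‖M i j‖₊)
        ≤ ∑ i, ∑ j, ‖M i j‖₊ :=
      Finset.sup_le fun i _ => Finset.single_le_sum (f := fun i => ∑ j, ‖M i j‖₊) (fun _ _ => zero_le) (Finset.mem_univ i)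
    calc (((Finset.univ : Finset (Fin d)).sup fun i => ∑ j, ‖M i j‖₊ : NNReal) : ℝ)
        ≤ ((∑ i, ∑ j, ‖M i j‖₊ : NNReal) : ℝ) := by exact_mod_cast this
      _ = ∑ i, ∑ j, ‖M i j‖ := by push_cast; rfl
  have hsum : Tendsto (fun t : ℝ => ∑ i, ∑ j, ‖(exp ((-(t : ℂ)) • B)) i j‖)
      atTop (𝓝 0) := by
    have h0 : (0 : ℝ) = ∑ _i : Fin d, ∑ _j : Fin d, (0 : ℝ) := by simp
    rw [h0]
    exact tendsto_finset_sum _ fun i _ => tendsto_finset_sum _ fun j _ => hentry i j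
  exact squeeze_zero (fun t => norm_nonneg _) (fun t => hb _) hsum

private lemma norm_map_ofReal' {d : ℕ} (M : Matrix (Fin d) (Fin d) ℝ) :
    ‖M.map Complex.ofReal‖ = ‖M‖ := by
  rw [Matrix.linfty_opNorm_def, Matrix.linfty_opNorm_def]
  congr 1
  refine Finset.sup_congr rfl fun i _ => ?_
  refine Finset.sum_congr rfl fun j _ => ?_
  simp [Matrix.map_apply]

/-- If `A` is positively stable then `exp(-tA) → 0` as `t → ∞`. -/
theorem pos_stable_exp_tendsto_zero {d : ℕ} (A : Matrix (Fin d) (Fin d) ℝ)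
    (hA : ∀ μ ∈ spectrum ℂ (A.map Complex.ofReal), 0 < μ.re) :
    Filter.Tendsto (fun t : ℝ => exp (-(t • A))) Filter.atTop (nhds 0) := by
  set B : Matrix (Fin d) (Fin d) ℂ := A.map Complex.ofReal with hBdef
  have hcont : Continuous fun M : Matrix (Fin d) (Fin d) ℝ => M.map Complex.ofReal := by
    exact Continuous.matrix_map continuous_id Complex.continuous_ofReal
  have hmap : ∀ t : ℝ, (exp (-(t • A))).map Complex.ofReal = exp ((-(t : ℂ)) • B) := by
    intro t
    have h1 := map_exp (Complex.ofRealHom.mapMatrix :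
      Matrix (Fin d) (Fin d) ℝ →+* Matrix (Fin d) (Fin d) ℂ) hcont (-(t • A))
    have h2 : (Complex.ofRealHom.mapMatrix : Matrix (Fin d) (Fin d) ℝ →+*
        Matrix (Fin d) (Fin d) ℂ) (-(t • A)) = (-(t : ℂ)) • B := by
      ext i j
      simp [RingHom.mapMatrix_apply, Matrix.map_apply, hBdef]
    rw [h2] at h1
    exact h1
  erw [tendsto_zero_iff_norm_tendsto_zero]
  have := mat_tendsto B hA
  refine this.congr fun t => ?_
  rw [← hmap t, norm_map_ofReal']
end

section
/- Let A be a d×d real matrix such that every eigenvalue of A is either zero (with equal algebraic and geometric multiplicity) or has strictly positive real part. Then exp(-tA) converges as t → ∞ to the projection P onto ker A along the sum of the generalized eigenspaces for the nonzero eigenvalues. -/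
open Matrix NormedSpace

attribute [local instance] Matrix.linftyOpNormedRing Matrix.linftyOpNormedAlgebra

namespace AlmostPosStableAux

open Filter Finset

variable {d : ℕ}

/-- If `M * N = c • N` then `exp M * N = exp c • N`. -/
lemma exp_mul_eq (c : ℝ) (M N : Matrix (Fin d) (Fin d) ℝ) (h : M * N = c • N) :
    exp M * N = Real.exp c • N := by
  have hpow : ∀ n : ℕ, M ^ n * N = c ^ n • N := by
    intro n
    induction n with
    | zero => simp
    | succ n ih =>
      rw [pow_succ', mul_assoc, ih, mul_smul_comm, h, smul_smul, ← pow_succ]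
  have hs : Summable fun n : ℕ => (n.factorial : ℝ)⁻¹ * c ^ n := by
    simpa [smul_eq_mul] using expSeries_summable' (𝕂 := ℝ) (𝔸 := ℝ) c
  have hv : Real.exp c = ∑' n : ℕ, (n.factorial : ℝ)⁻¹ * c ^ n := by
    rw [Real.exp_eq_exp_ℝ, exp_eq_tsum ℝ]
    simp [smul_eq_mul]
  calc exp M * N = (∑' n : ℕ, (n.factorial : ℝ)⁻¹ • M ^ n) * N := by rw [exp_eq_tsum ℝ]
    _ = ∑' n : ℕ, ((n.factorial : ℝ)⁻¹ • M ^ n) * N :=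
        ((expSeries_summable' (𝕂 := ℝ) M).tsum_mul_right N).symm
    _ = ∑' n : ℕ, ((n.factorial : ℝ)⁻¹ * c ^ n) • N := by
        exact tsum_congr fun n => by rw [smul_mul_assoc, hpow, smul_smul]
    _ = (∑' n : ℕ, (n.factorial : ℝ)⁻¹ * c ^ n) • N := hs.tsum_smul_const N
    _ = Real.exp c • N := by rw [← hv]

lemma exp_decomp (A P : Matrix (Fin d) (Fin d) ℝ)
    (hP1 : P * P = P) (hP2 : A * P = 0) (hP3 : P * A = 0) (t : ℝ) :
    exp (-(t • A)) = P + exp (-(t • (A + P))) - Real.exp (-t) • P := by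
  set B := A + P with hB
  have hBP : B * P = P := by rw [hB, add_mul, hP2, hP1, zero_add]
  have hPB : P * B = P := by rw [hB, mul_add, hP3, hP1, zero_add]
  have hcomm : Commute (-(t • B)) (t • P) := by
    show _ * _ = _ * _
    simp only [neg_mul, mul_neg, smul_mul_assoc, mul_smul_comm, hBP, hPB, smul_neg]
  have h1 : exp (-(t • A)) = exp (-(t • B)) * exp (t • P) := by
    rw [← Matrix.exp_add_of_commute _ _ hcomm]
    congr 1
    rw [hB, smul_add]
    abel
  have h2 : exp (t • P) = Real.exp t • P + (1 - P) := by
    have e1 : exp (t • P) * P = Real.exp t • P :=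
      exp_mul_eq t _ _ (by rw [smul_mul_assoc, hP1])
    have e2 : exp (t • P) * (1 - P) = Real.exp 0 • (1 - P) :=
      exp_mul_eq 0 _ _ (by rw [smul_mul_assoc, mul_sub, mul_one, hP1, sub_self, smul_zero,
        zero_smul])
    have : exp (t • P) * (P + (1 - P)) = Real.exp t • P + (1 - P) := by
      rw [mul_add, e1, e2, Real.exp_zero, one_smul]
    simpa using this
  have h3 : exp (-(t • B)) * P = Real.exp (-t) • P :=
    exp_mul_eq (-t) _ _ (by rw [Matrix.neg_mul, smul_mul_assoc, hBP, neg_smul, ← neg_smul])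
  rw [h1, h2, mul_add, mul_smul_comm, h3, mul_sub, mul_one, h3, smul_smul, ← Real.exp_add,
    add_neg_cancel, Real.exp_zero, one_smul]
  abel

lemma mulVec_map_ofReal (M : Matrix (Fin d) (Fin d) ℝ) (x : Fin d → ℝ) :
    (M.map Complex.ofReal) *ᵥ (fun i => (x i : ℂ)) = fun i => ((M *ᵥ x) i : ℂ) := by
  funext i
  simp only [Matrix.mulVec, dotProduct, Matrix.map_apply]
  push_cast
  rfl

lemma pos_re_of_eigen (A P : Matrix (Fin d) (Fin d) ℝ)
    (hspec : ∀ μ ∈ spectrum ℂ (A.map Complex.ofReal), μ = 0 ∨ 0 < μ.re)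
    (hP1 : P * P = P) (hP3 : P * A = 0)
    (hP4 : ∀ x : Fin d → ℝ, A *ᵥ x = 0 → P *ᵥ x = x)
    {μ : ℂ} {v : Fin d → ℂ} (hv : v ≠ 0)
    (heig : ((A + P).map Complex.ofReal) *ᵥ v = μ • v) : 0 < μ.re := by
  set φ : Matrix (Fin d) (Fin d) ℝ →+* Matrix (Fin d) (Fin d) ℂ :=
    Complex.ofRealHom.mapMatrix with hφ
  have hφap : ∀ M : Matrix (Fin d) (Fin d) ℝ, φ M = M.map Complex.ofReal := fun _ => rfl
  by_cases hμ1 : μ = 1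
  · rw [hμ1]; norm_num
  -- P (complexified) kills v
  have hPv : (φ P) *ᵥ v = 0 := by
    have h0 : (φ P) *ᵥ (((A + P).map Complex.ofReal) *ᵥ v) = (φ P) *ᵥ (μ • v) := by rw [heig]
    rw [← hφap, Matrix.mulVec_mulVec, ← _root_.map_mul, Matrix.mulVec_smul] at h0
    have hPAP : P * (A + P) = P := by rw [mul_add, hP3, hP1, zero_add]
    rw [hPAP] at h0
    have : (1 - μ) • ((φ P) *ᵥ v) = 0 := by
      rw [sub_smul, one_smul, ← h0, sub_self]
    rcases smul_eq_zero.mp this with h | h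
    · exact absurd (by rwa [sub_eq_zero, eq_comm] at h) hμ1
    · exact h
  have hAv : (A.map Complex.ofReal) *ᵥ v = μ • v := by
    have : ((A + P).map Complex.ofReal) = A.map Complex.ofReal + φ P := by
      rw [← hφap, ← hφap, map_add]
    rw [this, Matrix.add_mulVec, hPv, add_zero] at heig
    exact heig
  have hmem : μ ∈ spectrum ℂ (A.map Complex.ofReal) := by
    rw [spectrum.mem_iff]
    intro hunit
    obtain ⟨u, hu⟩ := hunit
    have hker : (algebraMap ℂ (Matrix (Fin d) (Fin d) ℂ) μ - A.map Complex.ofReal) *ᵥ v = 0 := by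
      rw [Matrix.sub_mulVec, hAv, Algebra.algebraMap_eq_smul_one, smul_mulVec,
        Matrix.one_mulVec, sub_self]
    have h1 : (↑u⁻¹ : Matrix (Fin d) (Fin d) ℂ) *ᵥ ((↑u : Matrix (Fin d) (Fin d) ℂ) *ᵥ v) = v := by
      rw [Matrix.mulVec_mulVec, u.inv_mul, Matrix.one_mulVec]
    rw [hu, hker, Matrix.mulVec_zero] at h1
    exact hv h1.symm
  rcases hspec μ hmem with h0 | hpos
  · -- μ = 0 contradicts hP4
    exfalso
    subst h0
    rw [zero_smul] at hAv
    set x : Fin d → ℝ := fun i => (v i).re with hx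
    set y : Fin d → ℝ := fun i => (v i).im with hy
    have hvxy : v = (fun i => (x i : ℂ)) + Complex.I • (fun i => (y i : ℂ)) := by
      funext i
      simp only [Pi.add_apply, Pi.smul_apply, smul_eq_mul, hx, hy]
      rw [mul_comm, Complex.re_add_im]
    have hsplit : ∀ M : Matrix (Fin d) (Fin d) ℝ, (M.map Complex.ofReal) *ᵥ v =
        (fun i => ((M *ᵥ x) i : ℂ)) + Complex.I • (fun i => ((M *ᵥ y) i : ℂ)) := by
      intro M
      rw [hvxy, Matrix.mulVec_add, Matrix.mulVec_smul, mulVec_map_ofReal, mulVec_map_ofReal]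
    have hsplit0 : ∀ (a b : Fin d → ℝ) ,
        ((fun i => ((a i : ℂ))) + Complex.I • (fun i => ((b i : ℂ))) = 0) → a = 0 ∧ b = 0 := by
      intro a b hab
      constructor <;> funext i <;>
      · have := congrFun hab i
        simp only [Pi.add_apply, Pi.smul_apply, smul_eq_mul, Pi.zero_apply] at this
        have hre := congrArg Complex.re this
        have him := congrArg Complex.im this
        simp at hre him
        simp [hre, him]
    have hA0 := hsplit0 _ _ ((hsplit A).symm.trans hAv)
    have hPx := hP4 x hA0.1
    have hPy := hP4 y hA0.2
    have : (φ P) *ᵥ v = v := by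
      rw [hφap, hsplit P, hPx, hPy, ← hvxy]
    rw [hPv] at this
    exact hv this.symm
  · exact hpos


lemma tendsto_gen_eigen (N : Matrix (Fin d) (Fin d) ℂ) {μ : ℂ} (hμ : 0 < μ.re) (k : ℕ)
    (w : Fin d → ℂ) (hw : (N - μ • 1) ^ k *ᵥ w = 0) :
    Filter.Tendsto (fun t : ℝ => exp (-(t • N)) *ᵥ w) Filter.atTop (nhds 0) := by
  set M' := N - μ • (1 : Matrix (Fin d) (Fin d) ℂ) with hM'
  have key : ∀ t : ℝ, exp (-(t • N)) *ᵥ w =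
      ∑ j ∈ Finset.range k, (Complex.exp (-(↑t * μ)) * ((j.factorial : ℂ)⁻¹ * (-(t : ℂ)) ^ j)) •
        (M' ^ j *ᵥ w) := by
    intro t
    have ht : t • N = (t : ℂ) • N := by
      ext i j
      simp [Complex.real_smul]
    have hsplit : -(t • N) = (-(↑t * μ)) • (1 : Matrix (Fin d) (Fin d) ℂ) + (-(t : ℂ)) • M' := by
      rw [ht, hM']
      module
    have hc : Commute ((-(↑t * μ)) • (1 : Matrix (Fin d) (Fin d) ℂ)) ((-(t : ℂ)) • M') :=
      ((Commute.one_left M').smul_left _).smul_right _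
    have h1 : exp ((-(↑t * μ)) • (1 : Matrix (Fin d) (Fin d) ℂ)) =
        Complex.exp (-(↑t * μ)) • (1 : Matrix (Fin d) (Fin d) ℂ) := by
      rw [← Algebra.algebraMap_eq_smul_one, ← Algebra.algebraMap_eq_smul_one,
        Complex.exp_eq_exp_ℂ]
      exact (map_exp (algebraMap ℂ (Matrix (Fin d) (Fin d) ℂ)) (continuous_algebraMap _ _) _).symm
    have hsum : Summable (fun n : ℕ => (n.factorial : ℂ)⁻¹ • ((-(t : ℂ)) • M') ^ n) :=
      expSeries_summable' _
    let L : Matrix (Fin d) (Fin d) ℂ →ₗ[ℂ] (Fin d → ℂ) :=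
      { toFun := fun X => X *ᵥ w
        map_add' := fun X Y => Matrix.add_mulVec X Y w
        map_smul' := fun c X => Matrix.smul_mulVec c X w }
    let Lc : Matrix (Fin d) (Fin d) ℂ →L[ℂ] (Fin d → ℂ) := LinearMap.toContinuousLinearMap L
    have hz : ∀ n ∉ Finset.range k, Lc ((n.factorial : ℂ)⁻¹ • ((-(t : ℂ)) • M') ^ n) = 0 := by
      intro n hn
      rw [Finset.mem_range, not_lt] at hn
      have hM0 : M' ^ n *ᵥ w = 0 := by
        rw [← Nat.sub_add_cancel hn, pow_add, ← Matrix.mulVec_mulVec, hw, Matrix.mulVec_zero]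
      show ((n.factorial : ℂ)⁻¹ • ((-(t : ℂ)) • M') ^ n) *ᵥ w = 0
      rw [smul_pow, Matrix.smul_mulVec, Matrix.smul_mulVec, hM0, smul_zero, smul_zero]
    have h2 : exp ((-(t : ℂ)) • M') *ᵥ w =
        ∑ j ∈ Finset.range k, ((j.factorial : ℂ)⁻¹ * (-(t : ℂ)) ^ j) • (M' ^ j *ᵥ w) := by
      calc exp ((-(t : ℂ)) • M') *ᵥ w
          = Lc (∑' n : ℕ, (n.factorial : ℂ)⁻¹ • ((-(t : ℂ)) • M') ^ n) := by
            rw [exp_eq_tsum ℂ]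
            rfl
        _ = ∑' n : ℕ, Lc ((n.factorial : ℂ)⁻¹ • ((-(t : ℂ)) • M') ^ n) := Lc.map_tsum hsum
        _ = ∑ j ∈ Finset.range k, Lc ((j.factorial : ℂ)⁻¹ • ((-(t : ℂ)) • M') ^ j) :=
            tsum_eq_sum hz
        _ = ∑ j ∈ Finset.range k, ((j.factorial : ℂ)⁻¹ * (-(t : ℂ)) ^ j) • (M' ^ j *ᵥ w) := by
            refine Finset.sum_congr rfl fun j _ => ?_
            show ((j.factorial : ℂ)⁻¹ • ((-(t : ℂ)) • M') ^ j) *ᵥ w = _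
            rw [smul_pow, Matrix.smul_mulVec, Matrix.smul_mulVec, smul_smul]
    rw [hsplit, Matrix.exp_add_of_commute _ _ hc, h1, Matrix.smul_mul, Matrix.one_mul,
      Matrix.smul_mulVec, h2, Finset.smul_sum]
    refine Finset.sum_congr rfl fun j _ => ?_
    rw [smul_smul]
  have hcoef : ∀ j : ℕ, Filter.Tendsto
      (fun t : ℝ => Complex.exp (-(↑t * μ)) * ((j.factorial : ℂ)⁻¹ * (-(t : ℂ)) ^ j))
      Filter.atTop (nhds 0) := by
    intro j
    have hg : Filter.Tendsto (fun t : ℝ => (j.factorial : ℝ)⁻¹ * (t ^ j * Real.exp (-(μ.re * t))))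
        Filter.atTop (nhds 0) := by
      have h1 : Filter.Tendsto (fun t : ℝ => μ.re * t) Filter.atTop Filter.atTop :=
        Filter.Tendsto.const_mul_atTop hμ Filter.tendsto_id
      have h2 := (Real.tendsto_pow_mul_exp_neg_atTop_nhds_zero j).comp h1
      have h3 := h2.const_mul ((μ.re ^ j)⁻¹)
      rw [mul_zero] at h3
      have h4 : Filter.Tendsto (fun t : ℝ => t ^ j * Real.exp (-(μ.re * t)))
          Filter.atTop (nhds 0) := by
        refine h3.congr fun t => ?_
        simp only [Function.comp_apply]
        rw [mul_pow, ← mul_assoc, ← mul_assoc, inv_mul_cancel₀ (by positivity), one_mul]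
      have h5 := h4.const_mul ((j.factorial : ℝ)⁻¹)
      rwa [mul_zero] at h5
    refine squeeze_zero_norm' ?_ hg
    filter_upwards [Filter.eventually_ge_atTop (0 : ℝ)] with t ht
    rw [norm_mul, norm_mul, norm_pow]
    have e1 : ‖Complex.exp (-(↑t * μ))‖ = Real.exp (-(μ.re * t)) := by
      rw [Complex.norm_exp]
      congr 1
      simp [Complex.mul_re, mul_comm]
    have e2 : ‖(-(t : ℂ))‖ = t := by
      rw [norm_neg, Complex.norm_real, Real.norm_eq_abs, abs_of_nonneg ht]
    have e3 : ‖((j.factorial : ℂ))⁻¹‖ = (j.factorial : ℝ)⁻¹ := by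
      rw [norm_inv]
      norm_num
    rw [e1, e2, e3]
    ring_nf
    exact le_refl _
  have hfin := tendsto_finset_sum (Finset.range k)
    (fun j (_ : j ∈ Finset.range k) => (hcoef j).smul_const (M' ^ j *ᵥ w))
  simp only [zero_smul, Finset.sum_const_zero] at hfin
  exact hfin.congr fun t => (key t).symm

lemma tendsto_mulVec_zero (N : Matrix (Fin d) (Fin d) ℂ)
    (hN : ∀ (μ : ℂ) (v : Fin d → ℂ), v ≠ 0 → N *ᵥ v = μ • v → 0 < μ.re) (v : Fin d → ℂ) :
    Filter.Tendsto (fun t : ℝ => exp (-(t • N)) *ᵥ v) Filter.atTop (nhds 0) := by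
  let S : Submodule ℂ (Fin d → ℂ) :=
    { carrier := {w | Filter.Tendsto (fun t : ℝ => exp (-(t • N)) *ᵥ w) Filter.atTop (nhds 0)}
      add_mem' := by
        intro a b ha hb
        have h := ha.add hb
        rw [add_zero] at h
        exact h.congr fun t => (Matrix.mulVec_add _ a b).symm
      zero_mem' := by
        have : Filter.Tendsto (fun _ : ℝ => (0 : Fin d → ℂ)) Filter.atTop (nhds 0) :=
          tendsto_const_nhds
        exact this.congr fun t => (Matrix.mulVec_zero _).symm
      smul_mem' := by
        intro c a ha
        have h := ha.const_smul c
        rw [smul_zero] at h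
        exact h.congr fun t => (Matrix.mulVec_smul _ c a).symm }
  suffices h : (⊤ : Submodule ℂ (Fin d → ℂ)) ≤ S from h Submodule.mem_top
  set f : Module.End ℂ (Fin d → ℂ) := Matrix.toLinAlgEquiv' N with hf
  rw [← Module.End.iSup_maxGenEigenspace_eq_top f]
  refine iSup_le fun μ => ?_
  by_cases hbot : f.maxGenEigenspace μ = ⊥
  · rw [hbot]; exact bot_le
  · have hev : f.HasEigenvalue μ := by
      obtain ⟨k, hk⟩ : ∃ k : ℕ, f.genEigenspace μ k ≠ ⊥ := by
        by_contra hcon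
        push_neg at hcon
        exact hbot (by rw [← Module.End.iSup_genEigenspace_eq]; exact iSup_eq_bot.mpr hcon)
      exact Module.End.hasEigenvalue_of_hasGenEigenvalue (k := k) hk
    obtain ⟨v₀, hv₀⟩ := hev.exists_hasEigenvector
    have hμpos : 0 < μ.re := by
      refine hN μ v₀ hv₀.right ?_
      have h := hv₀.apply_eq_smul
      rwa [hf, Matrix.toLinAlgEquiv'_apply] at h
    intro w hw
    rw [Module.End.mem_maxGenEigenspace] at hw
    obtain ⟨k, hk⟩ := hw
    have hEnd : f - μ • 1 = Matrix.toLinAlgEquiv' (N - μ • 1) := by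
      rw [hf, map_sub, _root_.map_smul, _root_.map_one]
    have hk' : (N - μ • 1) ^ k *ᵥ w = 0 := by
      rw [hEnd, ← map_pow] at hk
      rwa [Matrix.toLinAlgEquiv'_apply] at hk
    exact tendsto_gen_eigen N hμpos k w hk'

end AlmostPosStableAux

/-- If every eigenvalue of `A` is zero (with equal algebraic and geometric multiplicity,
i.e. `ker A² = ker A`) or has positive real part, then `exp(-tA)` converges as `t → ∞`
to the projection `P` onto `ker A` along the sum of the generalized eigenspaces of the
nonzero eigenvalues (that sum equals `range A` under the hypotheses, so `P` is
characterized by `P² = P`, `AP = 0`, `PA = 0` and `P = id` on `ker A`). -/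
theorem almost_pos_stable_exp_tendsto_proj {d : ℕ} (A P : Matrix (Fin d) (Fin d) ℝ)
    (hspec : ∀ μ ∈ spectrum ℂ (A.map Complex.ofReal), μ = 0 ∨ 0 < μ.re)
    (hkerstab : ∀ x : Fin d → ℝ, A *ᵥ (A *ᵥ x) = 0 → A *ᵥ x = 0)
    (hP1 : P * P = P) (hP2 : A * P = 0) (hP3 : P * A = 0)
    (hP4 : ∀ x : Fin d → ℝ, A *ᵥ x = 0 → P *ᵥ x = x) :
    Filter.Tendsto (fun t : ℝ => exp (-(t • A))) Filter.atTop (nhds P) := by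
  have hB := AlmostPosStableAux.exp_decomp A P hP1 hP2 hP3
  set N : Matrix (Fin d) (Fin d) ℂ := (A + P).map Complex.ofReal with hNdef
  have hN : ∀ (μ : ℂ) (v : Fin d → ℂ), v ≠ 0 → N *ᵥ v = μ • v → 0 < μ.re :=
    fun μ v hv heig => AlmostPosStableAux.pos_re_of_eigen A P hspec hP1 hP3 hP4 hv heig
  have hcol : ∀ v : Fin d → ℂ, Filter.Tendsto (fun t : ℝ => exp (-(t • N)) *ᵥ v)
      Filter.atTop (nhds 0) := AlmostPosStableAux.tendsto_mulVec_zero N hN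
  have hsm : ∀ (s : ℝ) (M : Matrix (Fin d) (Fin d) ℝ),
      (s • M).map Complex.ofReal = s • M.map Complex.ofReal := by
    intro s M
    ext i j
    simp [Matrix.map_apply, Complex.real_smul]
  have hmap : ∀ t : ℝ, (exp (-(t • (A + P)))).map Complex.ofReal = exp (-(t • N)) := by
    intro t
    have hcont : Continuous
        (Complex.ofRealHom.mapMatrix : Matrix (Fin d) (Fin d) ℝ →+* Matrix (Fin d) (Fin d) ℂ) :=
      Continuous.matrix_map continuous_id Complex.continuous_ofReal
    have h1 := map_exp
      (Complex.ofRealHom.mapMatrix : Matrix (Fin d) (Fin d) ℝ →+* Matrix (Fin d) (Fin d) ℂ)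
      hcont (-(t • (A + P)))
    have h2 : (Complex.ofRealHom.mapMatrix : Matrix (Fin d) (Fin d) ℝ →+* Matrix (Fin d) (Fin d) ℂ)
        (-(t • (A + P))) = -(t • N) := by
      rw [map_neg, RingHom.mapMatrix_apply]
      show -((t • (A + P)).map Complex.ofReal) = -(t • N)
      rw [hsm, hNdef]
    have h3 : (exp : Matrix (Fin d) (Fin d) ℂ → Matrix (Fin d) (Fin d) ℂ) = exp :=
      rfl
    rw [h2] at h1
    exact h1
  have hBzero : Filter.Tendsto (fun t : ℝ => exp (-(t • (A + P)))) Filter.atTop (nhds 0) := by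
    apply tendsto_zero_iff_norm_tendsto_zero.mpr
    have hg : Filter.Tendsto
        (fun t : ℝ => ∑ j : Fin d, ‖exp (-(t • N)) *ᵥ Pi.single j 1‖)
        Filter.atTop (nhds 0) := by
      have h := tendsto_finset_sum Finset.univ
        (fun (j : Fin d) (_ : j ∈ Finset.univ) => (hcol (Pi.single j 1)).norm)
      simpa using h
    refine squeeze_zero (fun t => norm_nonneg _) (fun t => ?_) hg
    have hentry : ∀ i j : Fin d, ‖exp (-(t • (A + P))) i j‖₊ ≤
        ‖exp (-(t • N)) *ᵥ Pi.single j 1‖₊ := by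
      intro i j
      have h1 : ((exp (-(t • N))) *ᵥ Pi.single j 1) i
          = ((exp (-(t • (A + P))) i j : ℝ) : ℂ) := by
        rw [← hmap t]
        simp [Matrix.mulVec_single, Matrix.map_apply]
      have h2 : ‖exp (-(t • (A + P))) i j‖ ≤ ‖exp (-(t • N)) *ᵥ Pi.single j 1‖ := by
        calc ‖exp (-(t • (A + P))) i j‖
            = ‖((exp (-(t • N))) *ᵥ Pi.single j 1) i‖ := by rw [h1, Complex.norm_real]
          _ ≤ ‖exp (-(t • N)) *ᵥ Pi.single j 1‖ := norm_le_pi_norm _ i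
      exact h2
    have hnn : ‖exp (-(t • (A + P)))‖₊ ≤
        ∑ j : Fin d, ‖exp (-(t • N)) *ᵥ Pi.single j 1‖₊ := by
      rw [Matrix.linfty_opNNNorm_def]
      exact Finset.sup_le fun i _ => Finset.sum_le_sum fun j _ => hentry i j
    calc ‖exp (-(t • (A + P)))‖
        = ((‖exp (-(t • (A + P)))‖₊ : ℝ)) := (coe_nnnorm _).symm
      _ ≤ ((∑ j : Fin d, ‖exp (-(t • N)) *ᵥ Pi.single j 1‖₊ : ℝ)) := by
          exact_mod_cast hnn
      _ = ∑ j : Fin d, ‖exp (-(t • N)) *ᵥ Pi.single j 1‖ := by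
          push_cast
          rfl
  have hconst : Filter.Tendsto (fun _ : ℝ => P) Filter.atTop (nhds P) := tendsto_const_nhds
  have hfinal := (hconst.add hBzero).sub
    (Real.tendsto_exp_neg_atTop_nhds_zero.smul_const P)
  rw [add_zero, zero_smul, sub_zero] at hfinal
  exact hfinal.congr fun t => (hB t).symm
end

section
/- Let A and B be d×d real matrices such that A + B is positively stable, and suppose ξ(t) = exp(-tA) - exp(-t(A+B)) converges as t → ∞. Then A is almost-positively stable, i.e., exp(-tA) converges as t → ∞, and the limit of ξ(t) is the projection onto ker A along the generalized eigenspaces of the nonzero eigenvalues of A. -/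
open Matrix NormedSpace Filter
attribute [local instance] Matrix.linftyOpNormedRing Matrix.linftyOpNormedAlgebra

variable {d : ℕ} {𝕜 : Type*} [RCLike 𝕜]

/-- `M ↦ M *ᵥ x` as an `ℝ`-linear map. -/
noncomputable def mulVecLM (x : Fin d → 𝕜) : Matrix (Fin d) (Fin d) 𝕜 →ₗ[ℝ] (Fin d → 𝕜) where
  toFun M := M *ᵥ x
  map_add' M N := Matrix.add_mulVec M N x
  map_smul' c M := by simp [Matrix.smul_mulVec]

lemma continuous_mulVecLM (x : Fin d → 𝕜) : Continuous (mulVecLM (d := d) x) :=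
  (mulVecLM x).continuous_of_finiteDimensional

/-- entry map as linear map -/
noncomputable def entryLM (i j : Fin d) : Matrix (Fin d) (Fin d) 𝕜 →ₗ[ℝ] 𝕜 where
  toFun M := M i j
  map_add' _ _ := rfl
  map_smul' _ _ := rfl

lemma continuous_entryLM (i j : Fin d) : Continuous (entryLM (𝕜 := 𝕜) i j) :=
  (entryLM (𝕜 := 𝕜) i j).continuous_of_finiteDimensional

lemma tendsto_matrix_of_entries {X : ℝ → Matrix (Fin d) (Fin d) 𝕜} {L : Matrix (Fin d) (Fin d) 𝕜}
    (h : ∀ i j, Tendsto (fun t => X t i j) atTop (nhds (L i j))) :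
    Tendsto X atTop (nhds L) := by
  let e : (Fin d → Fin d → 𝕜) →ₗ[ℝ] Matrix (Fin d) (Fin d) 𝕜 :=
    { toFun := Matrix.of, map_add' := fun _ _ => rfl, map_smul' := fun _ _ => rfl }
  have he : Continuous e := e.continuous_of_finiteDimensional
  have : Tendsto (fun t => (fun i j => X t i j)) atTop (nhds (fun i j => L i j)) := by
    rw [tendsto_pi_nhds]; intro i; rw [tendsto_pi_nhds]; intro j; exact h i j
  exact (he.tendsto _).comp this

lemma exp_mulVec_of_pow (M : Matrix (Fin d) (Fin d) 𝕜) (x : Fin d → 𝕜) (k : ℕ)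
    (h : M ^ k *ᵥ x = 0) :
    exp M *ᵥ x = ∑ n ∈ Finset.range k, ((n.factorial : ℝ)⁻¹) • (M ^ n *ᵥ x) := by
  have hzero : ∀ n, k ≤ n → M ^ n *ᵥ x = 0 := by
    intro n hn
    rw [← Nat.sub_add_cancel hn, pow_add, ← Matrix.mulVec_mulVec, h, Matrix.mulVec_zero]
  have hsum : Summable fun n : ℕ => ((n.factorial : ℝ)⁻¹) • M ^ n := expSeries_summable' (𝕂 := ℝ) M
  let f : Matrix (Fin d) (Fin d) 𝕜 →L[ℝ] (Fin d → 𝕜) := ⟨mulVecLM x, continuous_mulVecLM x⟩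
  have h1 : exp M *ᵥ x = ∑' n : ℕ, ((n.factorial : ℝ)⁻¹) • (M ^ n *ᵥ x) := by
    have := f.map_tsum hsum
    simpa [f, mulVecLM, exp_eq_tsum ℝ] using this
  rw [h1]
  exact tsum_eq_sum (fun n hn => by
    rw [hzero n (by simpa using hn), smul_zero])

lemma exp_smul_one (c : ℂ) :
    exp (c • (1 : Matrix (Fin d) (Fin d) ℂ)) = Complex.exp c • 1 := by
  rw [Complex.exp_eq_exp_ℂ]
  have halg : c • (1 : Matrix (Fin d) (Fin d) ℂ) = algebraMap ℂ _ c := by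
    simp [Algebra.algebraMap_eq_smul_one]
  rw [halg]
  erw [← map_exp (algebraMap ℂ (Matrix (Fin d) (Fin d) ℂ))
    (algebraMapCLM ℂ (Matrix (Fin d) (Fin d) ℂ)).continuous]
  simp [Algebra.algebraMap_eq_smul_one]

lemma exp_shift (M : Matrix (Fin d) (Fin d) ℂ) (μ : ℂ) (t : ℝ) :
    exp (-(t • M)) =
      Complex.exp (-(t : ℂ) * μ) • exp ((-(t : ℂ)) • (M - μ • 1)) := by
  have hsplit : -(t • M) = (-(t : ℂ) * μ) • (1 : Matrix (Fin d) (Fin d) ℂ)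
      + (-(t : ℂ)) • (M - μ • 1) := by
    have ht : t • M = (t : ℂ) • M := by
      ext i j; simp [Complex.real_smul]
    rw [ht]; module
  rw [hsplit, Matrix.exp_add_of_commute, exp_smul_one, smul_mul_assoc, one_mul]
  exact ((Commute.one_left _).smul_left _).smul_right _

lemma scalar_case {μ c : ℂ}
    (h : Tendsto (fun t : ℝ => Complex.exp (-(t : ℂ) * μ)) atTop (nhds c)) :
    μ = 0 ∨ 0 < μ.re := by
  set g : ℝ → ℂ := fun t => Complex.exp (-(t : ℂ) * μ) with hg
  have hmul : ∀ s : ℝ, c * g s = c := by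
    intro s
    have h1 : Tendsto (fun t : ℝ => g (t + s)) atTop (nhds c) :=
      h.comp (tendsto_atTop_add_const_right atTop s tendsto_id)
    have h2 : (fun t : ℝ => g (t + s)) = fun t : ℝ => g t * g s := by
      funext t
      simp only [hg, ← Complex.exp_add]
      congr 1
      push_cast
      ring
    rw [h2] at h1
    exact tendsto_nhds_unique (h.mul_const (g s)) h1
  have hnorm : ∀ t : ℝ, ‖g t‖ = Real.exp (-(t * μ.re)) := by
    intro t
    simp [hg, Complex.norm_exp]
  by_cases hc : c = 0
  · right
    by_contra hre
    push_neg at hre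
    have hb : Tendsto (fun t : ℝ => ‖g t‖) atTop (nhds 0) := by
      simpa [hc] using h.norm
    have hev1 : ∀ᶠ t : ℝ in atTop, ‖g t‖ < 1 :=
      hb.eventually (eventually_lt_nhds one_pos)
    have hev2 : ∀ᶠ t : ℝ in atTop, (1:ℝ) ≤ ‖g t‖ := by
      filter_upwards [eventually_ge_atTop (0:ℝ)] with t ht
      rw [hnorm t, ← Real.exp_zero]
      exact Real.exp_le_exp.2 (by nlinarith)
    obtain ⟨t, h1, h2⟩ := (hev1.and hev2).exists
    linarith
  · left
    have hone : ∀ s : ℝ, g s = 1 := fun s =>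
      mul_left_cancel₀ hc (by rw [hmul s, mul_one])
    have hre : μ.re = 0 := by
      have h1 := hnorm 1
      rw [hone 1] at h1
      simp only [norm_one] at h1
      have := Real.exp_injective (h1.symm.trans Real.exp_zero.symm)
      linarith
    by_contra hμ
    have him : μ.im ≠ 0 := fun h0 => hμ (Complex.ext hre h0)
    obtain ⟨b, hb⟩ : ∃ b : ℝ, μ = (b : ℂ) * Complex.I ∧ b ≠ 0 := by
      refine ⟨μ.im, ?_, him⟩
      nth_rewrite 1 [← Complex.re_add_im μ]
      rw [hre]; simp
    obtain ⟨hμeq, hbne⟩ := hb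
    have hs := hone (Real.pi / b)
    rw [hg] at hs
    simp only at hs
    rw [hμeq] at hs
    have harg : -((Real.pi / b : ℝ) : ℂ) * ((b : ℂ) * Complex.I)
        = -((Real.pi : ℂ) * Complex.I) := by
      push_cast
      have : (b : ℂ) ≠ 0 := Complex.ofReal_ne_zero.2 hbne
      field_simp
    rw [harg, Complex.exp_neg, Complex.exp_pi_mul_I] at hs
    norm_num at hs

lemma tendsto_texp {μ : ℂ} (hμ : 0 < μ.re) (n : ℕ) :
    Tendsto (fun t : ℝ => Complex.exp (-(t : ℂ) * μ) * (-(t : ℂ)) ^ n) atTop (nhds 0) := by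
  rw [tendsto_zero_iff_norm_tendsto_zero]
  have key : Tendsto (fun t : ℝ => (μ.re : ℝ)⁻¹ ^ n * ((μ.re * t) ^ n * Real.exp (-(μ.re * t))))
      atTop (nhds ((μ.re : ℝ)⁻¹ ^ n * 0)) :=
    ((Real.tendsto_pow_mul_exp_neg_atTop_nhds_zero n).comp
      (tendsto_id.const_mul_atTop hμ)).const_mul _
  rw [mul_zero] at key
  refine key.congr' ?_
  filter_upwards [eventually_ge_atTop (0:ℝ)] with t ht
  rw [norm_mul, norm_pow, Complex.norm_exp]
  simp only [norm_neg, Complex.norm_real, Complex.norm_natCast]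
  have h1 : (-(t:ℂ) * μ).re = -(t * μ.re) := by simp
  rw [h1]
  rw [Real.norm_of_nonneg ht]
  have : (μ.re * t) ^ n = μ.re ^ n * t ^ n := by ring
  rw [this]
  have hne : μ.re ≠ 0 := ne_of_gt hμ
  field_simp
  rw [← mul_pow, one_div, inv_mul_cancel₀ hne, one_pow, one_mul]

lemma decay_vec {d : ℕ} (M : Matrix (Fin d) (Fin d) ℂ)
    (hM : ∀ μ ∈ spectrum ℂ M, 0 < μ.re) (x : Fin d → ℂ) :
    Tendsto (fun t : ℝ => exp (-(t • M)) *ᵥ x) atTop (nhds 0) := by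
  set f : Module.End ℂ (Fin d → ℂ) := Matrix.toLinAlgEquiv' M with hf
  have hx : x ∈ ⨆ μ : ℂ, f.maxGenEigenspace μ := by
    rw [Module.End.iSup_maxGenEigenspace_eq_top]; trivial
  refine Submodule.iSup_induction _
    (motive := fun y => Tendsto (fun t : ℝ => exp (-(t • M)) *ᵥ y) atTop (nhds 0)) hx ?_ ?_ ?_
  · intro μ y hy
    rcases eq_or_ne y 0 with rfl | hy0
    · simpa [Matrix.mulVec_zero] using (tendsto_const_nhds : Tendsto (fun _ : ℝ => (0 : Fin d → ℂ)) atTop _)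
    · -- μ is an eigenvalue, hence in spectrum
      obtain ⟨k, hk⟩ := (Module.End.mem_maxGenEigenspace _ _ _).mp hy
      have hμspec : μ ∈ spectrum ℂ M := by
        rw [← AlgEquiv.spectrum_eq Matrix.toLinAlgEquiv' M]
        rw [← Module.End.hasEigenvalue_iff_mem_spectrum]
        refine Module.End.hasEigenvalue_of_hasGenEigenvalue (k := k) ?_
        rw [Module.End.hasGenEigenvalue_iff]
        intro hbot
        have hmem : y ∈ (f.genEigenspace μ) k := Module.End.mem_genEigenspace_nat.mpr hk
        rw [hbot] at hmem
        exact hy0 (by simpa using hmem)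
      have hμ : 0 < μ.re := hM μ hμspec
      set N : Matrix (Fin d) (Fin d) ℂ := M - μ • 1 with hN
      have hNk : N ^ k *ᵥ y = 0 := by
        have hNlin : Matrix.toLinAlgEquiv' (N ^ k) = (f - μ • 1) ^ k := by
          rw [map_pow, hN, map_sub, _root_.map_smul, _root_.map_one, hf]
        have h2 := congrArg (fun g : Module.End ℂ (Fin d → ℂ) => g y) hNlin
        simp only [hk] at h2
        rw [← Matrix.toLinAlgEquiv'_apply (N ^ k) y]
        exact h2
      have hterm : ∀ t : ℝ, exp (-(t • M)) *ᵥ y =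
          ∑ n ∈ Finset.range k, ((n.factorial : ℝ)⁻¹) •
            ((Complex.exp (-(t : ℂ) * μ) * (-(t : ℂ)) ^ n) • (N ^ n *ᵥ y)) := by
        intro t
        rw [exp_shift M μ t, Matrix.smul_mulVec,
          exp_mulVec_of_pow ((-(t:ℂ)) • N) y k (by
            rw [smul_pow, Matrix.smul_mulVec, hNk, smul_zero]),
          Finset.smul_sum]
        refine Finset.sum_congr rfl fun n _ => ?_
        rw [smul_pow, Matrix.smul_mulVec]
        rw [smul_comm (Complex.exp (-(t:ℂ)*μ)) ((n.factorial : ℝ)⁻¹)]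
        rw [mul_smul]
      simp only [hterm]
      rw [show (0 : Fin d → ℂ) = ∑ n ∈ Finset.range k, (0 : Fin d → ℂ) by simp]
      refine tendsto_finset_sum _ fun n _ => ?_
      have := ((tendsto_texp hμ n).smul_const (N ^ n *ᵥ y)).const_smul ((n.factorial : ℝ)⁻¹)
      simpa using this
  · simpa [Matrix.mulVec_zero] using (tendsto_const_nhds : Tendsto (fun _ : ℝ => (0 : Fin d → ℂ)) atTop _)
  · intro y z hy hz
    have := hy.add hz
    simpa [Matrix.mulVec_add] using this

lemma decay_matrix {d : ℕ} (M : Matrix (Fin d) (Fin d) ℂ)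
    (hM : ∀ μ ∈ spectrum ℂ M, 0 < μ.re) :
    Tendsto (fun t : ℝ => exp (-(t • M))) atTop (nhds 0) := by
  refine tendsto_matrix_of_entries fun i j => ?_
  have h1 := ((continuous_apply i).tendsto (0 : Fin d → ℂ)).comp
    (decay_vec M hM (Pi.single j 1))
  have h2 : (fun t : ℝ => (exp (-(t • M)) *ᵥ Pi.single j 1) i)
      = fun t : ℝ => exp (-(t • M)) i j := by
    funext t
    simp [Matrix.mulVec_single]
  have h3 : ((fun p : Fin d → ℂ => p i) ∘ fun t : ℝ => exp (-(t • M)) *ᵥ Pi.single j 1)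
      = fun t : ℝ => exp (-(t • M)) i j := h2
  rw [h3] at h1
  simpa using h1

/-- complexification as an `ℝ`-algebra hom on matrices -/
noncomputable def cm (d : ℕ) : Matrix (Fin d) (Fin d) ℝ →ₐ[ℝ] Matrix (Fin d) (Fin d) ℂ :=
  AlgHom.mapMatrix Complex.ofRealAm

lemma cm_apply {d : ℕ} (X : Matrix (Fin d) (Fin d) ℝ) :
    cm d X = X.map Complex.ofReal := rfl

lemma continuous_cm (d : ℕ) : Continuous (cm d) :=
  (cm d).toLinearMap.continuous_of_finiteDimensional

lemma cm_exp {d : ℕ} (X : Matrix (Fin d) (Fin d) ℝ) :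
    cm d (exp X) = exp (cm d X) :=
  map_exp (cm d) (continuous_cm d) X

lemma cm_neg_smul {d : ℕ} (X : Matrix (Fin d) (Fin d) ℝ) (t : ℝ) :
    cm d (-(t • X)) = -(t • X.map Complex.ofReal) := by
  rw [map_neg, ← cm_apply, _root_.map_smul]

lemma decay_real {d : ℕ} (C : Matrix (Fin d) (Fin d) ℝ)
    (hC : ∀ μ ∈ spectrum ℂ (C.map Complex.ofReal), 0 < μ.re) :
    Tendsto (fun t : ℝ => exp (-(t • C))) atTop (nhds 0) := by
  have hc := decay_matrix (C.map Complex.ofReal) hC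
  refine tendsto_matrix_of_entries fun i j => ?_
  have h1 : Tendsto (fun t : ℝ => entryLM (𝕜 := ℂ) i j (exp (-(t • C.map Complex.ofReal))))
      atTop (nhds (entryLM (𝕜 := ℂ) i j 0)) :=
    ((continuous_entryLM i j).tendsto _).comp hc
  have h2 : Tendsto (fun t : ℝ => (exp (-(t • C.map Complex.ofReal)) i j).re)
      atTop (nhds 0) := by
    have := (Complex.continuous_re.tendsto _).comp h1
    exact this
  refine h2.congr fun t => ?_
  rw [← cm_neg_smul, ← cm_exp, cm_apply]
  simp

lemma semigroupE {d : ℕ} (C : Matrix (Fin d) (Fin d) ℝ) (t s : ℝ) :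
    exp (-((t + s) • C)) = exp (-(t • C)) * exp (-(s • C)) := by
  rw [← Matrix.exp_add_of_commute]
  · congr 1; module
  · exact ((Commute.refl C).smul_left t |>.smul_right s).neg_left.neg_right

lemma eigen_exp_mulVec {d : ℕ} (M : Matrix (Fin d) (Fin d) ℂ) {μ : ℂ} {v : Fin d → ℂ}
    (hv : M *ᵥ v = μ • v) (t : ℝ) :
    exp (-(t • M)) *ᵥ v = Complex.exp (-(t : ℂ) * μ) • v := by
  have hN : (M - μ • 1) *ᵥ v = 0 := by
    rw [Matrix.sub_mulVec, hv, Matrix.smul_mulVec, Matrix.one_mulVec, sub_self]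
  rw [exp_shift M μ t, Matrix.smul_mulVec,
    exp_mulVec_of_pow _ v 1 (by
      rw [pow_one, Matrix.smul_mulVec, hN, smul_zero])]
  simp

/-- If `A + B` is positively stable and `ξ(t) = exp(-tA) - exp(-t(A+B))` converges
as `t → ∞`, then `A` is almost-positively stable (zero eigenvalues have equal algebraic
and geometric multiplicity, i.e. `ker A² = ker A`, all other eigenvalues have positive
real part), and the limit of `ξ` is the projection onto `ker A` along the generalized
eigenspaces of the nonzero eigenvalues of `A`. -/
theorem xi_converges_iff_almost_pos_stable {d : ℕ} (A B : Matrix (Fin d) (Fin d) ℝ)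
    (hAB : ∀ μ ∈ spectrum ℂ ((A + B).map Complex.ofReal), 0 < μ.re)
    (hconv : ∃ L : Matrix (Fin d) (Fin d) ℝ,
      Filter.Tendsto (fun t : ℝ => exp (-(t • A)) - exp (-(t • (A + B))))
        Filter.atTop (nhds L)) :
    (∀ μ ∈ spectrum ℂ (A.map Complex.ofReal), μ = 0 ∨ 0 < μ.re) ∧
    (∀ x : Fin d → ℝ, A *ᵥ (A *ᵥ x) = 0 → A *ᵥ x = 0) ∧
    ∃ P : Matrix (Fin d) (Fin d) ℝ,
      (P * P = P ∧ A * P = 0 ∧ P * A = 0 ∧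
        (∀ x : Fin d → ℝ, A *ᵥ x = 0 → P *ᵥ x = x)) ∧
      Filter.Tendsto (fun t : ℝ => exp (-(t • A)) - exp (-(t • (A + B))))
        Filter.atTop (nhds P) := by
  obtain ⟨L, hL⟩ := hconv
  have hR : Tendsto (fun t : ℝ => exp (-(t • (A + B)))) atTop (nhds 0) :=
    decay_real (A + B) hAB
  have hE : Tendsto (fun t : ℝ => exp (-(t • A))) atTop (nhds L) := by
    have := hL.add hR
    simpa using this
  -- complexification
  set Ac : Matrix (Fin d) (Fin d) ℂ := A.map Complex.ofReal with hAc
  have hEc : Tendsto (fun t : ℝ => exp (-(t • Ac))) atTop (nhds (L.map Complex.ofReal)) := by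
    have h1 := ((continuous_cm d).tendsto _).comp hE
    have h2 : ((cm d) ∘ fun t : ℝ => exp (-(t • A)))
        = fun t : ℝ => exp (-(t • Ac)) := by
      funext t
      simp only [Function.comp_apply, cm_exp, cm_neg_smul, hAc]
    rw [h2] at h1
    rw [← cm_apply]
    exact h1
  refine ⟨?_, ?_, ?_⟩
  · -- spectrum
    intro μ hμ
    have hEig : Module.End.HasEigenvalue (Matrix.toLinAlgEquiv' Ac :
        Module.End ℂ (Fin d → ℂ)) μ := by
      rw [Module.End.hasEigenvalue_iff_mem_spectrum]
      rwa [AlgEquiv.spectrum_eq Matrix.toLinAlgEquiv' Ac]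
    obtain ⟨v, hv⟩ := hEig.exists_hasEigenvector
    have hv0 : v ≠ 0 := hv.right
    have hvA : Ac *ᵥ v = μ • v := by
      have := hv.apply_eq_smul
      rwa [Matrix.toLinAlgEquiv'_apply] at this
    obtain ⟨i, hi⟩ := Function.ne_iff.mp hv0
    have h1 : Tendsto (fun t : ℝ => exp (-(t • Ac)) *ᵥ v) atTop
        (nhds (L.map Complex.ofReal *ᵥ v)) := by
      have := ((continuous_mulVecLM v).tendsto _).comp hEc
      exact this
    have h2 : Tendsto (fun t : ℝ => Complex.exp (-(t : ℂ) * μ) * v i) atTop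
        (nhds ((L.map Complex.ofReal *ᵥ v) i)) := by
      have h3 := ((continuous_apply i).tendsto _).comp h1
      refine h3.congr fun t => ?_
      simp only [Function.comp_apply, eigen_exp_mulVec Ac hvA t, Pi.smul_apply,
        smul_eq_mul]
    have h4 : Tendsto (fun t : ℝ => Complex.exp (-(t : ℂ) * μ)) atTop
        (nhds ((L.map Complex.ofReal *ᵥ v) i * (v i)⁻¹)) := by
      have := h2.mul_const (v i)⁻¹
      refine this.congr fun t => ?_
      have : v i ≠ 0 := by simpa using hi
      field_simp
    exact scalar_case h4
  · -- kernel condition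
    intro x hx
    have hxe : ∀ t : ℝ, exp (-(t • A)) *ᵥ x = x - t • (A *ᵥ x) := by
      intro t
      rw [exp_mulVec_of_pow (-(t • A)) x 2 (by
        rw [pow_two, ← Matrix.mulVec_mulVec]
        rw [Matrix.neg_mulVec, Matrix.smul_mulVec]
        rw [Matrix.neg_mulVec, Matrix.smul_mulVec]
        rw [Matrix.mulVec_neg, Matrix.mulVec_smul, hx]
        simp)]
      rw [Finset.sum_range_succ, Finset.sum_range_one]
      simp [Matrix.neg_mulVec, Matrix.smul_mulVec, sub_eq_add_neg]
    -- convergence forces A *ᵥ x = 0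
    set w : Fin d → ℝ := A *ᵥ x with hw
    have h1 : Tendsto (fun t : ℝ => exp (-(t • A)) *ᵥ x) atTop (nhds (L *ᵥ x)) :=
      ((continuous_mulVecLM x).tendsto _).comp hE
    have h2 : Tendsto (fun t : ℝ => x - t • w) atTop (nhds (L *ᵥ x)) := by
      refine h1.congr fun t => hxe t
    have h3 : Tendsto (fun t : ℝ => t • w) atTop (nhds (x - L *ᵥ x)) := by
      have := tendsto_const_nhds (x := x) (f := atTop (α := ℝ)).sub h2
      simpa using this
    have h4 : Tendsto (fun t : ℝ => (t + 1) • w) atTop (nhds (x - L *ᵥ x)) :=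
      h3.comp (tendsto_atTop_add_const_right atTop 1 tendsto_id)
    have h5 : Tendsto (fun t : ℝ => (t + 1) • w - t • w) atTop (nhds 0) := by
      have := h4.sub h3
      simpa using this
    have h6 : (fun t : ℝ => (t + 1) • w - t • w) = fun _ : ℝ => w := by
      funext t
      rw [add_smul, one_smul, add_sub_cancel_left]
    rw [h6] at h5
    exact tendsto_nhds_unique tendsto_const_nhds h5
  · -- the projection
    refine ⟨L, ⟨?_, ?_, ?_, ?_⟩, hL⟩
    case _ => -- L * L = L
      have h1 : ∀ s : ℝ, L * exp (-(s • A)) = L := by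
        intro s
        have hshift : Tendsto (fun t : ℝ => exp (-((t + s) • A))) atTop (nhds L) :=
          hE.comp (tendsto_atTop_add_const_right atTop s tendsto_id)
        have h2 : Tendsto (fun t : ℝ => exp (-(t • A)) * exp (-(s • A))) atTop
            (nhds (L * exp (-(s • A)))) := hE.mul_const _
        refine tendsto_nhds_unique ?_ hshift
        exact h2.congr fun t => (semigroupE A t s).symm
      have h3 : Tendsto (fun s : ℝ => L * exp (-(s • A))) atTop (nhds (L * L)) :=
        hE.const_mul L
      refine tendsto_nhds_unique h3 ?_
      exact tendsto_const_nhds.congr fun s => (h1 s).symm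
    case _ => -- A * L = 0
      have h1 : ∀ s : ℝ, exp (s • (-A)) * L = L := by
        intro s
        have hshift : Tendsto (fun t : ℝ => exp (-((s + t) • A))) atTop (nhds L) :=
          hE.comp (tendsto_atTop_add_const_left atTop s tendsto_id)
        have h2 : Tendsto (fun t : ℝ => exp (-(s • A)) * exp (-(t • A))) atTop
            (nhds (exp (-(s • A)) * L)) := hE.const_mul _
        have h3 := tendsto_nhds_unique (h2.congr fun t => (semigroupE A s t).symm) hshift
        rw [← h3]
        congr 2
        rw [smul_neg]
      have hD : HasDerivAt (fun s : ℝ => exp (s • (-A)) * L)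
          ((exp ((0:ℝ) • (-A)) * (-A)) * L) 0 :=
        (hasDerivAt_exp_smul_const (𝕂 := ℝ) (-A) (0:ℝ)).mul_const L
      have hC : HasDerivAt (fun _ : ℝ => L) (0 : Matrix (Fin d) (Fin d) ℝ) 0 :=
        hasDerivAt_const 0 L
      have := hD.congr_deriv rfl
      have huniq : (exp ((0:ℝ) • (-A)) * (-A)) * L = 0 := by
        have heq : (fun s : ℝ => exp (s • (-A)) * L) = fun _ : ℝ => L := funext h1
        rw [heq] at hD
        exact hD.unique hC
      rw [zero_smul, exp_zero, one_mul, neg_mul] at huniq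
      exact neg_eq_zero.mp huniq
    case _ => -- L * A = 0
      have h1 : ∀ s : ℝ, L * exp (s • (-A)) = L := by
        intro s
        have hshift : Tendsto (fun t : ℝ => exp (-((t + s) • A))) atTop (nhds L) :=
          hE.comp (tendsto_atTop_add_const_right atTop s tendsto_id)
        have h2 : Tendsto (fun t : ℝ => exp (-(t • A)) * exp (-(s • A))) atTop
            (nhds (L * exp (-(s • A)))) := hE.mul_const _
        have h3 := tendsto_nhds_unique (h2.congr fun t => (semigroupE A t s).symm) hshift
        rw [← h3]
        congr 2
        rw [smul_neg]
      have hD : HasDerivAt (fun s : ℝ => L * exp (s • (-A)))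
          (L * (exp ((0:ℝ) • (-A)) * (-A))) 0 :=
        (hasDerivAt_exp_smul_const (𝕂 := ℝ) (-A) (0:ℝ)).const_mul L
      have hC : HasDerivAt (fun _ : ℝ => L) (0 : Matrix (Fin d) (Fin d) ℝ) 0 :=
        hasDerivAt_const 0 L
      have huniq : L * (exp ((0:ℝ) • (-A)) * (-A)) = 0 := by
        have heq : (fun s : ℝ => L * exp (s • (-A))) = fun _ : ℝ => L := funext h1
        rw [heq] at hD
        exact hD.unique hC
      rw [zero_smul, exp_zero, one_mul, mul_neg] at huniq
      exact neg_eq_zero.mp huniq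
    case _ => -- kernel fixed
      intro x hx
      have hfix : ∀ t : ℝ, exp (-(t • A)) *ᵥ x = x := by
        intro t
        rw [exp_mulVec_of_pow (-(t • A)) x 1 (by
          rw [pow_one, Matrix.neg_mulVec, Matrix.smul_mulVec, hx]
          simp)]
        simp
      have h1 : Tendsto (fun t : ℝ => exp (-(t • A)) *ᵥ x) atTop (nhds (L *ᵥ x)) :=
        ((continuous_mulVecLM x).tendsto _).comp hE
      have h2 : Tendsto (fun _ : ℝ => x) atTop (nhds (L *ᵥ x)) :=
        h1.congr fun t => hfix t
      exact tendsto_nhds_unique h2 tendsto_const_nhds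
end

section
/- Let A, B be d×d real matrices with A almost-positively stable and A + B positively stable. Let P be the projection onto ker A, α = min{Re λ : λ eigenvalue of A+B}, β = min{Re λ : λ ≠ 0 eigenvalue of A} (β = 0 if A = 0). Then there exist constants c₁, c₂ > 0 and naturals n₁, n₂ such that for all x ∈ ℝ^d and t ≥ 0, |(exp(-tA) - exp(-t(A+B)))x - Px| ≤ c₂(1+t^{n₂}) e^{-βt} |(I-P)x| + c₁(1+t^{n₁}) e^{-αt} |x|. -/
open Matrix NormedSpace

open Polynomial

attribute [local instance] Matrix.linftyOpNormedRing Matrix.linftyOpNormedAlgebra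

section XiAux

variable {d : ℕ}

-- ### exp fixes vectors killed by the matrix
lemma exp_mulVec_fix (M : Matrix (Fin d) (Fin d) ℝ) (y : Fin d → ℝ)
    (h : M *ᵥ y = 0) : NormedSpace.exp M *ᵥ y = y := by
  have hsum : Summable fun n : ℕ => ((Nat.factorial n : ℝ)⁻¹) • M ^ n := expSeries_summable' M
  let L : Matrix (Fin d) (Fin d) ℝ →ₗ[ℝ] (Fin d → ℝ) :=
    { toFun := fun X => X *ᵥ y
      map_add' := fun X Y => Matrix.add_mulVec X Y y
      map_smul' := fun c X => by simp [smul_mulVec] }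
  have hL : Continuous L := LinearMap.continuous_of_finiteDimensional L
  let L' : Matrix (Fin d) (Fin d) ℝ →L[ℝ] (Fin d → ℝ) := ⟨L, hL⟩
  have h2 : HasSum (fun n : ℕ => L' (((Nat.factorial n : ℝ)⁻¹) • M ^ n)) (L' (NormedSpace.exp M)) := by
    rw [exp_eq_tsum ℝ]
    exact (hsum.hasSum).mapL L'
  have h3 : (fun n : ℕ => L' (((Nat.factorial n : ℝ)⁻¹) • M ^ n)) =
      fun n => if n = 0 then y else 0 := by
    funext n
    cases n with
    | zero => simp [L', L]
    | succ n =>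
      have hz : M ^ (n+1) *ᵥ y = 0 := by
        rw [pow_succ, ← Matrix.mulVec_mulVec, h, Matrix.mulVec_zero]
      simp [L', L, smul_mulVec, hz]
  rw [h3] at h2
  exact h2.unique (hasSum_ite_eq 0 y)

noncomputable def pr (lam : ℕ → ℂ) : ℕ → ℝ → ℂ
  | 0 => fun t => Complex.exp (-lam 0 * t)
  | (k+1) => fun t => Complex.exp (-lam (k+1) * t) *
      ∫ s in (0:ℝ)..t, Complex.exp (lam (k+1) * s) * pr lam k s

noncomputable def prPrev (lam : ℕ → ℂ) : ℕ → ℝ → ℂ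
  | 0 => fun _ => 0
  | (k+1) => pr lam k

lemma cexp_hasDerivAt (c : ℂ) (t : ℝ) :
    HasDerivAt (fun s : ℝ => Complex.exp (c * s)) (c * Complex.exp (c * t)) t := by
  have h1 : HasDerivAt (fun s : ℝ => (c * s : ℂ)) c t := by
    simpa using (Complex.ofRealCLM.hasDerivAt (x := t)).const_mul c
  simpa [mul_comm] using h1.cexp

lemma pr_deriv (lam : ℕ → ℂ) :
    ∀ k, Continuous (pr lam k) ∧
      ∀ t, HasDerivAt (pr lam k) (-lam k * pr lam k t + prPrev lam k t) t := by
  intro k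
  induction k with
  | zero =>
    constructor
    · exact Complex.continuous_exp.comp (by continuity)
    · intro t
      simpa [pr, prPrev] using cexp_hasDerivAt (-lam 0) t
  | succ k ih =>
    obtain ⟨ihc, _⟩ := ih
    have hint : Continuous fun s : ℝ => Complex.exp (lam (k+1) * s) * pr lam k s := by
      exact (Complex.continuous_exp.comp (by continuity)).mul ihc
    have hF : ∀ t : ℝ, HasDerivAt (fun u : ℝ => ∫ s in (0:ℝ)..u, Complex.exp (lam (k+1) * s) * pr lam k s)
        (Complex.exp (lam (k+1) * t) * pr lam k t) t := by
      intro t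
      exact intervalIntegral.integral_hasDerivAt_right
        (hint.intervalIntegrable 0 t)
        (hint.stronglyMeasurableAtFilter _ _)
        hint.continuousAt
    have hd : ∀ t, HasDerivAt (pr lam (k+1))
        (-lam (k+1) * pr lam (k+1) t + pr lam k t) t := by
      intro t
      have h1 := (cexp_hasDerivAt (-lam (k+1)) t).mul (hF t)
      have heq : -lam (k+1) * Complex.exp (-lam (k+1) * t) *
            (∫ s in (0:ℝ)..t, Complex.exp (lam (k+1) * s) * pr lam k s) +
          Complex.exp (-lam (k+1) * t) * (Complex.exp (lam (k+1) * t) * pr lam k t) =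
          -lam (k+1) * pr lam (k+1) t + pr lam k t := by
        have hone : Complex.exp (-lam (k+1) * t) * Complex.exp (lam (k+1) * t) = 1 := by
          rw [← Complex.exp_add, neg_mul, neg_add_cancel, Complex.exp_zero]
        rw [pr, ← mul_assoc, hone, one_mul, mul_assoc]
      rw [← heq]
      exact h1
    refine ⟨?_, hd⟩
    exact continuous_iff_continuousAt.2 fun t => (hd t).continuousAt

lemma pr_zero_val (lam : ℕ → ℂ) : pr lam 0 0 = 1 := by simp [pr]

lemma pr_succ_zero_val (lam : ℕ → ℂ) (k : ℕ) : pr lam (k+1) 0 = 0 := by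
  simp [pr]

lemma norm_cexp_mul_ofReal (c : ℂ) (t : ℝ) : ‖Complex.exp (c * t)‖ = Real.exp (c.re * t) := by
  rw [Complex.norm_exp]
  congr 1
  simp [Complex.mul_re]

lemma pr_norm_le (lam : ℕ → ℂ) (α : ℝ) :
    ∀ k, (∀ j, j ≤ k → α ≤ (lam j).re) → ∀ t : ℝ, 0 ≤ t →
      ‖pr lam k t‖ ≤ t ^ k / Nat.factorial k * Real.exp (-(α * t)) := by
  intro k
  induction k with
  | zero =>
    intro hj t ht
    rw [pr, norm_cexp_mul_ofReal]
    simp only [pow_zero, Nat.factorial_zero, Nat.cast_one, div_one, one_mul]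
    apply Real.exp_le_exp.2
    have := hj 0 le_rfl
    simp only [Complex.neg_re]
    nlinarith
  | succ k ih =>
    intro hj t ht
    have hαk : α ≤ (lam (k+1)).re := hj (k+1) le_rfl
    have ihb := ih (fun j hjk => hj j (hjk.trans (Nat.le_succ k)))
    rw [pr, norm_mul, norm_cexp_mul_ofReal]
    -- bound the integral
    have hbound : ‖∫ s in (0:ℝ)..t, Complex.exp (lam (k+1) * s) * pr lam k s‖ ≤
        |∫ s in (0:ℝ)..t, Real.exp (((lam (k+1)).re - α) * t) * (s ^ k / Nat.factorial k)| := by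
      apply intervalIntegral.norm_integral_le_abs_of_norm_le
      · filter_upwards [MeasureTheory.ae_restrict_mem measurableSet_uIoc] with s hs
        rw [Set.uIoc_of_le ht] at hs
        have hs0 : 0 ≤ s := le_of_lt hs.1
        have hst : s ≤ t := hs.2
        rw [norm_mul, norm_cexp_mul_ofReal]
        have h1 : ‖pr lam k s‖ ≤ s ^ k / Nat.factorial k * Real.exp (-(α * s)) := ihb s hs0
        calc Real.exp ((lam (k+1)).re * s) * ‖pr lam k s‖
            ≤ Real.exp ((lam (k+1)).re * s) * (s ^ k / Nat.factorial k * Real.exp (-(α * s))) := by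
              apply mul_le_mul_of_nonneg_left h1 (Real.exp_pos _).le
          _ = Real.exp (((lam (k+1)).re - α) * s) * (s ^ k / Nat.factorial k) := by
              have he : Real.exp ((lam (k+1)).re * s) * Real.exp (-(α * s))
                  = Real.exp (((lam (k+1)).re - α) * s) := by
                rw [← Real.exp_add]; ring_nf
              rw [← he]; ring
          _ ≤ Real.exp (((lam (k+1)).re - α) * t) * (s ^ k / Nat.factorial k) := by
              apply mul_le_mul_of_nonneg_right _ (by positivity)
              apply Real.exp_le_exp.2
              apply mul_le_mul_of_nonneg_left hst (by linarith)
      · apply Continuous.intervalIntegrable; continuity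
    have hintval : |∫ s in (0:ℝ)..t, Real.exp (((lam (k+1)).re - α) * t) * (s ^ k / Nat.factorial k)|
        = Real.exp (((lam (k+1)).re - α) * t) * (t ^ (k+1) / ((k+1) * Nat.factorial k)) := by
      have hfac : (0:ℝ) < Nat.factorial k := by positivity
      rw [intervalIntegral.integral_const_mul, intervalIntegral.integral_div, integral_pow,
        zero_pow (Nat.succ_ne_zero k), sub_zero]
      rw [abs_of_nonneg (by positivity)]
      congr 1
      have hk : ((k:ℝ)+1) ≠ 0 := by positivity
      field_simp
    calc Real.exp ((-lam (k+1)).re * t) * ‖∫ s in (0:ℝ)..t, Complex.exp (lam (k+1) * s) * pr lam k s‖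
        ≤ Real.exp ((-lam (k+1)).re * t) *
          (Real.exp (((lam (k+1)).re - α) * t) * (t ^ (k+1) / ((k+1) * Nat.factorial k))) := by
          rw [← hintval]
          exact mul_le_mul_of_nonneg_left hbound (Real.exp_pos _).le
      _ = t ^ (k+1) / Nat.factorial (k+1) * Real.exp (-(α * t)) := by
          have hexp : Real.exp ((-lam (k+1)).re * t) * Real.exp (((lam (k+1)).re - α) * t)
              = Real.exp (-(α * t)) := by
            rw [← Real.exp_add]
            congr 1
            rw [Complex.neg_re]
            ring
          rw [← mul_assoc, hexp, Nat.factorial_succ]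
          push_cast
          ring

lemma root_charpoly_mem_spectrum (N : Matrix (Fin d) (Fin d) ℂ) (μ : ℂ)
    (h : N.charpoly.IsRoot μ) : μ ∈ spectrum ℂ N := by
  have hdet : ((charmatrix N).map (evalRingHom μ)).det = 0 := by
    have := (evalRingHom μ).map_det (charmatrix N)
    rw [RingHom.mapMatrix_apply] at this
    rw [← this]
    exact h
  have hmap : (charmatrix N).map (evalRingHom μ) = μ • (1 : Matrix (Fin d) (Fin d) ℂ) - N := by
    ext i j
    by_cases hij : i = j
    · subst hij
      simp [charmatrix_apply_eq, Matrix.one_apply]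
    · simp [charmatrix_apply_ne _ _ _ hij, Matrix.one_apply, hij]
  rw [hmap] at hdet
  rw [spectrum.mem_iff]
  intro hu
  rw [Algebra.algebraMap_eq_smul_one] at hu
  have := (Matrix.isUnit_iff_isUnit_det _).1 hu
  rw [hdet] at this
  exact (not_isUnit_zero : ¬ IsUnit (0:ℂ)) this

lemma mem_spectrum_of_eigenvector (N : Matrix (Fin d) (Fin d) ℂ) (μ : ℂ) (v : Fin d → ℂ)
    (hv : v ≠ 0) (h : N *ᵥ v = μ • v) : μ ∈ spectrum ℂ N := by
  rw [spectrum.mem_iff]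
  intro hu
  rw [Algebra.algebraMap_eq_smul_one] at hu
  have hdet := (Matrix.isUnit_iff_isUnit_det _).1 hu
  have hker : (μ • (1 : Matrix (Fin d) (Fin d) ℂ) - N) *ᵥ v = 0 := by
    rw [Matrix.sub_mulVec, Matrix.smul_mulVec, Matrix.one_mulVec, h, sub_self]
  have := (Matrix.exists_mulVec_eq_zero_iff.1 ⟨v, hv, hker⟩)
  rw [this] at hdet
  exact (not_isUnit_zero : ¬ IsUnit (0:ℂ)) hdet

lemma spectrum_of_mem_mulVec (N : Matrix (Fin d) (Fin d) ℂ) (μ : ℂ) (h : μ ∈ spectrum ℂ N) :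
    ∃ v : Fin d → ℂ, v ≠ 0 ∧ N *ᵥ v = μ • v := by
  rw [spectrum.mem_iff, Algebra.algebraMap_eq_smul_one] at h
  have hdet : (μ • (1 : Matrix (Fin d) (Fin d) ℂ) - N).det = 0 := by
    by_contra hne
    exact h ((Matrix.isUnit_iff_isUnit_det _).2 (isUnit_iff_ne_zero.2 hne))
  obtain ⟨v, hv, hker⟩ := Matrix.exists_mulVec_eq_zero_iff.2 hdet
  refine ⟨v, hv, ?_⟩
  rw [Matrix.sub_mulVec, Matrix.smul_mulVec, Matrix.one_mulVec, sub_eq_zero] at hker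
  exact hker.symm

lemma neg_list_prod {R : Type*} [Ring R] : ∀ L : List R,
    (L.map fun x => -x).prod = ((-1:ℤ) ^ L.length) • L.prod
  | [] => by simp
  | a :: L => by
    rw [List.map_cons, List.prod_cons, List.prod_cons, neg_list_prod L, List.length_cons,
      pow_succ, mul_neg_one, neg_mul, mul_smul_comm, neg_smul]

noncomputable def Pm (N : Matrix (Fin d) (Fin d) ℂ) (lam : ℕ → ℂ) (k : ℕ) :
    Matrix (Fin d) (Fin d) ℂ :=
  ((List.range k).map (fun i => lam i • (1 : Matrix (Fin d) (Fin d) ℂ) - N)).prod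

lemma Pm_zero (N : Matrix (Fin d) (Fin d) ℂ) (lam : ℕ → ℂ) : Pm N lam 0 = 1 := by
  simp [Pm]

lemma Pm_succ (N : Matrix (Fin d) (Fin d) ℂ) (lam : ℕ → ℂ) (k : ℕ) :
    Pm N lam (k+1) = Pm N lam k * (lam k • 1 - N) := by
  simp [Pm, List.range_succ]

lemma smul_one_commute (a : ℂ) (X : Matrix (Fin d) (Fin d) ℂ) :
    Commute (a • (1 : Matrix (Fin d) (Fin d) ℂ)) X :=
  (Commute.one_left X).smul_left a

lemma factor_commute (N : Matrix (Fin d) (Fin d) ℂ) (a b : ℂ) :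
    Commute (a • (1 : Matrix (Fin d) (Fin d) ℂ) - N) (b • 1 - N) :=
  ((smul_one_commute a _).sub_left
    (((smul_one_commute b N).symm).sub_right (Commute.refl N)))

lemma factor_commute_Pm (N : Matrix (Fin d) (Fin d) ℂ) (lam : ℕ → ℂ) (z : ℂ) (k : ℕ) :
    Commute (z • (1 : Matrix (Fin d) (Fin d) ℂ) - N) (Pm N lam k) := by
  apply Commute.list_prod_right
  intro y hy
  simp only [List.mem_map, List.mem_range] at hy
  obtain ⟨i, _, rfl⟩ := hy
  exact factor_commute N z (lam i)

lemma negN_mul_Pm (N : Matrix (Fin d) (Fin d) ℂ) (lam : ℕ → ℂ) (k : ℕ) :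
    (-N) * Pm N lam k = Pm N lam (k+1) - lam k • Pm N lam k := by
  rw [Pm_succ, ← (factor_commute_Pm N lam (lam k) k).eq, sub_mul, smul_mul_assoc, one_mul,
    neg_mul]
  abel

lemma key_sum (N : Matrix (Fin d) (Fin d) ℂ) (lam : ℕ → ℂ) (t : ℝ)
    (hPd : Pm N lam d = 0) :
    ∑ k ∈ Finset.range d, (-lam k * pr lam k t + prPrev lam k t) • Pm N lam k =
      (-N) * ∑ k ∈ Finset.range d, pr lam k t • Pm N lam k := by
  rw [Finset.mul_sum]
  have h1 : ∀ k, (-N) * (pr lam k t • Pm N lam k) =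
      pr lam k t • Pm N lam (k+1) - (lam k * pr lam k t) • Pm N lam k := by
    intro k
    rw [mul_smul_comm, negN_mul_Pm, smul_sub, smul_smul, mul_comm]
  simp_rw [h1, add_smul, neg_mul, neg_smul]
  rw [Finset.sum_add_distrib, Finset.sum_sub_distrib]
  have h2 : ∑ k ∈ Finset.range d, prPrev lam k t • Pm N lam k =
      ∑ k ∈ Finset.range d, pr lam k t • Pm N lam (k+1) := by
    cases d with
    | zero => simp
    | succ m =>
      rw [Finset.sum_range_succ' (fun k => prPrev lam k t • Pm N lam k) m,
        Finset.sum_range_succ]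
      simp [prPrev, hPd]
  rw [h2, Finset.sum_neg_distrib]
  abel

lemma Pm_dim_eq_zero (N : Matrix (Fin d) (Fin d) ℂ) :
    Pm N (fun k => (N.charpoly.roots.toList).getD k 0) d = 0 := by
  set p := N.charpoly with hp
  have hmon : p.Monic := N.charpoly_monic
  have hsp : p.Splits := IsAlgClosed.splits p
  set l := p.roots.toList with hl
  have hlen : l.length = d := by
    rw [hl, Multiset.length_toList, (Polynomial.splits_iff_card_roots).1 hsp, hp,
      Matrix.charpoly_natDegree_eq_dim, Fintype.card_fin]
  have hCH : (l.map fun a => N - a • 1).prod = 0 := by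
    have h0 : Polynomial.aeval N p = 0 := Matrix.aeval_self_charpoly N
    have hfact : p = (l.map fun a => Polynomial.X - Polynomial.C a).prod := by
      conv_lhs => rw [hsp.eq_prod_roots_of_monic hmon]
      rw [← Multiset.coe_toList p.roots, Multiset.map_coe, Multiset.prod_coe]
    rw [hfact, map_list_prod (Polynomial.aeval N), List.map_map] at h0
    have : (Polynomial.aeval N) ∘ (fun a => Polynomial.X - Polynomial.C a) =
        fun a : ℂ => N - a • 1 := by
      funext a
      simp [Algebra.algebraMap_eq_smul_one]
    rwa [this] at h0
  have hlist : (List.range d).map (fun i => (l.getD · 0) i • (1 : Matrix (Fin d) (Fin d) ℂ) - N)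
      = (l.map fun a => N - a • 1).map (fun x => -x) := by
    rw [List.map_map]
    apply List.ext_getElem (by simp [hlen])
    intro i h1 h2
    simp only [List.getElem_map, List.getElem_range, Function.comp_apply]
    rw [List.getD_eq_getElem _ _ (by simpa [hlen] using h2), neg_sub]
  rw [Pm, hlist, neg_list_prod, hCH, smul_zero]

lemma exp_decay_complex (N : Matrix (Fin d) (Fin d) ℂ) (α : ℝ)
    (hs : ∀ μ ∈ spectrum ℂ N, α ≤ μ.re) :
    ∃ c > (0:ℝ), ∀ t : ℝ, 0 ≤ t →
      ‖NormedSpace.exp (-(t • N))‖ ≤ c * (1 + t ^ d) * Real.exp (-(α * t)) := by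
  rcases Nat.eq_zero_or_pos d with hd | hd
  · refine ⟨1, one_pos, fun t ht => ?_⟩
    subst hd
    have : NormedSpace.exp (-(t • N)) = 0 := Subsingleton.elim _ _
    rw [this, norm_zero]
    positivity
  · set l := N.charpoly.roots.toList with hl
    set lam : ℕ → ℂ := fun k => l.getD k 0 with hlam
    have hmon : N.charpoly.Monic := N.charpoly_monic
    have hsp : N.charpoly.Splits := IsAlgClosed.splits N.charpoly
    have hlen : l.length = d := by
      rw [hl, Multiset.length_toList, (Polynomial.splits_iff_card_roots).1 hsp,
        Matrix.charpoly_natDegree_eq_dim, Fintype.card_fin]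
    have hroot : ∀ k, k < d → α ≤ (lam k).re := by
      intro k hk
      have hk' : k < l.length := by rw [hlen]; exact hk
      have hmem : lam k ∈ l := by
        rw [hlam]
        simp only
        rw [List.getD_eq_getElem _ _ hk']
        exact List.getElem_mem hk'
      have hmem2 : lam k ∈ N.charpoly.roots := by
        rwa [hl, Multiset.mem_toList] at hmem
      have hisroot : N.charpoly.IsRoot (lam k) :=
        (Polynomial.mem_roots hmon.ne_zero).1 hmem2
      exact hs _ (root_charpoly_mem_spectrum N _ hisroot)
    have hPd : Pm N lam d = 0 := Pm_dim_eq_zero N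
    set S : ℝ → Matrix (Fin d) (Fin d) ℂ :=
      fun t => ∑ k ∈ Finset.range d, pr lam k t • Pm N lam k with hS
    -- S satisfies the ODE
    have hSd : ∀ t, HasDerivAt S ((-N) * S t) t := by
      intro t
      have h1 : HasDerivAt S
          (∑ k ∈ Finset.range d, (-lam k * pr lam k t + prPrev lam k t) • Pm N lam k) t :=
        HasDerivAt.fun_sum fun k _ => ((pr_deriv lam k).2 t).smul_const (Pm N lam k)
      rwa [key_sum N lam t hPd] at h1
    -- exp (t • N) * S t is constant
    have hg : ∀ t : ℝ, NormedSpace.exp (t • N) * S t = 1 := by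
      have hgd : ∀ t : ℝ, HasDerivAt (fun u : ℝ => NormedSpace.exp (u • N) * S u) 0 t := by
        intro t
        have h1 := (hasDerivAt_exp_smul_const (𝕂 := ℝ) N t).mul (hSd t)
        have h2 : NormedSpace.exp (t • N) * N * S t + NormedSpace.exp (t • N) * ((-N) * S t) = 0 := by
          rw [mul_assoc, neg_mul, mul_neg, add_neg_cancel]
        have h3 : HasDerivAt (fun u : ℝ => NormedSpace.exp (u • N) * S u)
            (NormedSpace.exp (t • N) * N * S t + NormedSpace.exp (t • N) * ((-N) * S t)) t := h1
        rwa [h2] at h3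
      have hconst : ∀ t : ℝ, (fun u : ℝ => NormedSpace.exp (u • N) * S u) t =
          (fun u : ℝ => NormedSpace.exp (u • N) * S u) 0 :=
        fun t => is_const_of_deriv_eq_zero
          (fun s => (hgd s).differentiableAt) (fun s => (hgd s).deriv) t 0
      have hS0 : S 0 = 1 := by
        show ∑ k ∈ Finset.range d, pr lam k 0 • Pm N lam k = 1
        rw [Finset.sum_eq_single_of_mem 0 (Finset.mem_range.2 hd)]
        · rw [pr_zero_val, Pm_zero, one_smul]
        · intro k _ hk0
          obtain ⟨j, rfl⟩ := Nat.exists_eq_succ_of_ne_zero hk0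
          rw [pr_succ_zero_val, zero_smul]
      intro t
      have h : NormedSpace.exp (t • N) * S t = NormedSpace.exp ((0:ℝ) • N) * S 0 := hconst t
      rw [zero_smul, exp_zero, one_mul, hS0] at h
      exact h
    have hSe : ∀ t : ℝ, NormedSpace.exp (-(t • N)) = S t := by
      intro t
      have hinv : NormedSpace.exp (-(t • N)) * NormedSpace.exp (t • N) = 1 := by
        rw [← show NormedSpace.exp (-(t • N) + t • N) = NormedSpace.exp (-(t • N)) * NormedSpace.exp (t • N) from
          exp_add_of_commute ((Commute.refl (t • N)).neg_left), neg_add_cancel, exp_zero]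
      calc NormedSpace.exp (-(t • N)) = NormedSpace.exp (-(t • N)) * (NormedSpace.exp (t • N) * S t) := by
            rw [hg t, mul_one]
        _ = (NormedSpace.exp (-(t • N)) * NormedSpace.exp (t • N)) * S t := (mul_assoc _ _ _).symm
        _ = S t := by rw [hinv, one_mul]
    refine ⟨(∑ k ∈ Finset.range d, ‖Pm N lam k‖) + 1, by positivity, fun t ht => ?_⟩
    rw [hSe t]
    have hb : ∀ k ∈ Finset.range d, ‖pr lam k t • Pm N lam k‖ ≤
        (1 + t ^ d) * Real.exp (-(α * t)) * ‖Pm N lam k‖ := by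
      intro k hk
      rw [Finset.mem_range] at hk
      rw [norm_smul]
      apply mul_le_mul_of_nonneg_right _ (norm_nonneg _)
      have h1 : ‖pr lam k t‖ ≤ t ^ k / Nat.factorial k * Real.exp (-(α * t)) :=
        pr_norm_le lam α k (fun j hj => hroot j (lt_of_le_of_lt hj hk)) t ht
      refine h1.trans (mul_le_mul_of_nonneg_right ?_ (Real.exp_pos _).le)
      have h2 : t ^ k / Nat.factorial k ≤ t ^ k := by
        apply div_le_self (by positivity)
        exact_mod_cast Nat.one_le_iff_ne_zero.2 (Nat.factorial_ne_zero k)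
      refine h2.trans ?_
      rcases le_total t 1 with h | h
      · have : t ^ k ≤ 1 := pow_le_one₀ ht h
        nlinarith [pow_nonneg ht d]
      · have : t ^ k ≤ t ^ d := pow_le_pow_right₀ h hk.le
        nlinarith [pow_nonneg ht k]
    calc ‖S t‖ ≤ ∑ k ∈ Finset.range d, ‖pr lam k t • Pm N lam k‖ := norm_sum_le _ _
      _ ≤ ∑ k ∈ Finset.range d, (1 + t ^ d) * Real.exp (-(α * t)) * ‖Pm N lam k‖ :=
          Finset.sum_le_sum hb
      _ = ((1 + t ^ d) * Real.exp (-(α * t))) * (∑ k ∈ Finset.range d, ‖Pm N lam k‖) := by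
          rw [← Finset.mul_sum]
      _ ≤ ((1 + t ^ d) * Real.exp (-(α * t))) * ((∑ k ∈ Finset.range d, ‖Pm N lam k‖) + 1) := by
          have hsum : (0:ℝ) ≤ ∑ k ∈ Finset.range d, ‖Pm N lam k‖ :=
            Finset.sum_nonneg fun k _ => norm_nonneg _
          have h1t : (0:ℝ) ≤ 1 + t ^ d := by positivity
          nlinarith [Real.exp_pos (-(α * t))]
      _ = ((∑ k ∈ Finset.range d, ‖Pm N lam k‖) + 1) * (1 + t ^ d) * Real.exp (-(α * t)) := by
          ring

lemma norm_matrix_map_ofReal (M : Matrix (Fin d) (Fin d) ℝ) :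
    ‖M.map Complex.ofReal‖ = ‖M‖ := by
  rw [Matrix.linfty_opNorm_def, Matrix.linfty_opNorm_def]
  congr 1
  congr 1
  funext i
  congr 1
  funext j
  simp [Matrix.map_apply]

lemma exp_map_ofReal (M : Matrix (Fin d) (Fin d) ℝ) :
    (NormedSpace.exp M).map Complex.ofReal = NormedSpace.exp (M.map Complex.ofReal) := by
  have hcont : Continuous (Complex.ofRealHom.mapMatrix :
      Matrix (Fin d) (Fin d) ℝ →+* Matrix (Fin d) (Fin d) ℂ) := by
    have : ⇑(Complex.ofRealHom.mapMatrix : Matrix (Fin d) (Fin d) ℝ →+* Matrix (Fin d) (Fin d) ℂ)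
        = fun M : Matrix (Fin d) (Fin d) ℝ => M.map Complex.ofReal := by
      funext M
      rfl
    rw [this]
    exact Continuous.matrix_map continuous_id Complex.continuous_ofReal
  have := map_exp (Complex.ofRealHom.mapMatrix :
      Matrix (Fin d) (Fin d) ℝ →+* Matrix (Fin d) (Fin d) ℂ) hcont M
  exact this

lemma exp_decay_real (M : Matrix (Fin d) (Fin d) ℝ) (α : ℝ)
    (hs : ∀ μ ∈ spectrum ℂ (M.map Complex.ofReal), α ≤ μ.re) :
    ∃ c > (0:ℝ), ∀ t : ℝ, 0 ≤ t → ∀ x : Fin d → ℝ,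
      ‖NormedSpace.exp (-(t • M)) *ᵥ x‖ ≤ c * (1 + t ^ d) * Real.exp (-(α * t)) * ‖x‖ := by
  obtain ⟨c, hc, hbound⟩ := exp_decay_complex (M.map Complex.ofReal) α hs
  refine ⟨c, hc, fun t ht x => ?_⟩
  have hmap : (-(t • M)).map Complex.ofReal = -(t • (M.map Complex.ofReal)) := by
    ext i j
    simp [Matrix.map_apply, Complex.real_smul]
  have hnorm : ‖NormedSpace.exp (-(t • M))‖ = ‖NormedSpace.exp (-(t • (M.map Complex.ofReal)))‖ := by
    rw [← hmap, ← exp_map_ofReal, norm_matrix_map_ofReal]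
  calc ‖NormedSpace.exp (-(t • M)) *ᵥ x‖ ≤ ‖NormedSpace.exp (-(t • M))‖ * ‖x‖ :=
        Matrix.linfty_opNorm_mulVec _ _
    _ ≤ (c * (1 + t ^ d) * Real.exp (-(α * t))) * ‖x‖ := by
        apply mul_le_mul_of_nonneg_right _ (norm_nonneg x)
        rw [hnorm]
        exact hbound t ht

-- real part / imaginary part of complexified mulVec
lemma mulVec_map_re (A : Matrix (Fin d) (Fin d) ℝ) (v : Fin d → ℂ) (j : Fin d) :
    ((A.map Complex.ofReal *ᵥ v) j).re = (A *ᵥ (fun i => (v i).re)) j ∧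
    ((A.map Complex.ofReal *ᵥ v) j).im = (A *ᵥ (fun i => (v i).im)) j := by
  constructor
  · simp [Matrix.mulVec, dotProduct, Matrix.map_apply, Complex.re_sum, Complex.mul_re]
  · simp [Matrix.mulVec, dotProduct, Matrix.map_apply, Complex.im_sum, Complex.mul_im]

-- complexification of the kernel property hP4
lemma hP4_complex (A P : Matrix (Fin d) (Fin d) ℝ)
    (hP4 : ∀ x : Fin d → ℝ, A *ᵥ x = 0 → P *ᵥ x = x)
    (v : Fin d → ℂ) (hv : A.map Complex.ofReal *ᵥ v = 0) :
    P.map Complex.ofReal *ᵥ v = v := by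
  set vr : Fin d → ℝ := fun i => (v i).re
  set vi : Fin d → ℝ := fun i => (v i).im
  have hre : A *ᵥ vr = 0 := by
    funext j
    have := congrFun hv j
    have h1 := (mulVec_map_re A v j).1
    rw [this] at h1
    simpa using h1.symm
  have him : A *ᵥ vi = 0 := by
    funext j
    have := congrFun hv j
    have h1 := (mulVec_map_re A v j).2
    rw [this] at h1
    simpa using h1.symm
  have h2 := hP4 vr hre
  have h3 := hP4 vi him
  funext j
  apply Complex.ext
  · rw [(mulVec_map_re P v j).1, h2]
  · rw [(mulVec_map_re P v j).2, h3]

lemma spectrum_AP_bound (A P : Matrix (Fin d) (Fin d) ℝ)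
    (hP1 : P * P = P) (hP3 : P * A = 0)
    (hP4 : ∀ x : Fin d → ℝ, A *ᵥ x = 0 → P *ᵥ x = x)
    (β : ℝ) (hβ₀ : A = 0 → β = 0)
    (hβ : A ≠ 0 →
      IsLeast {r : ℝ | ∃ μ ∈ spectrum ℂ (A.map Complex.ofReal), μ ≠ 0 ∧ μ.re = r} β) :
    ∀ μ ∈ spectrum ℂ ((A + β • P).map Complex.ofReal), β ≤ μ.re := by
  intro μ hμ
  set Ac := A.map Complex.ofReal with hAc
  set Pc := P.map Complex.ofReal with hPc
  have hmul : ∀ (X Y : Matrix (Fin d) (Fin d) ℝ),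
      (X.map Complex.ofReal) * (Y.map Complex.ofReal) = (X * Y).map Complex.ofReal := by
    intro X Y
    ext i j
    simp only [Matrix.mul_apply, Matrix.map_apply]
    norm_cast
  have hmapeq : (A + β • P).map Complex.ofReal = Ac + (β : ℂ) • Pc := by
    ext i j
    simp [hAc, hPc, Matrix.map_apply, Complex.real_smul]
  rw [hmapeq] at hμ
  obtain ⟨v, hv, heig⟩ := spectrum_of_mem_mulVec _ μ hμ
  have hPP : Pc * Pc = Pc := by
    rw [hPc, hmul, hP1]
  have hPA : Pc * Ac = 0 := by
    rw [hPc, hAc, hmul, hP3]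
    ext i j; simp [Matrix.map_apply]
  -- apply Pc to the eigen equation
  have hPv : Pc *ᵥ (Ac *ᵥ v) + (β:ℂ) • (Pc *ᵥ (Pc *ᵥ v)) = μ • (Pc *ᵥ v) := by
    have := congrArg (fun w => Pc *ᵥ w) heig
    simpa [Matrix.add_mulVec, Matrix.mulVec_add, Matrix.mulVec_smul, smul_mulVec]
      using this
  have hPAv : Pc *ᵥ (Ac *ᵥ v) = 0 := by
    rw [Matrix.mulVec_mulVec, hPA, Matrix.zero_mulVec]
  have hPPv : Pc *ᵥ (Pc *ᵥ v) = Pc *ᵥ v := by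
    rw [Matrix.mulVec_mulVec, hPP]
  rw [hPAv, hPPv, zero_add] at hPv
  by_cases hPvz : Pc *ᵥ v = 0
  · -- then Ac v = μ v
    have hAv : Ac *ᵥ v = μ • v := by
      have : (Ac + (β:ℂ) • Pc) *ᵥ v = Ac *ᵥ v + (β:ℂ) • (Pc *ᵥ v) := by
        simp [Matrix.add_mulVec, smul_mulVec]
      rw [this, hPvz, smul_zero, add_zero] at heig
      exact heig
    have hμne : μ ≠ 0 := by
      intro h0
      rw [h0, zero_smul] at hAv
      have := hP4_complex A P hP4 v hAv
      rw [hPvz] at this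
      exact hv this.symm
    have hAne : A ≠ 0 := by
      intro h0
      apply hμne
      rw [h0] at hAc
      have hAc0 : Ac = 0 := by
        rw [hAc]; ext i j; simp
      rw [hAc0, Matrix.zero_mulVec] at hAv
      rcases smul_eq_zero.1 hAv.symm with h | h
      · exact h
      · exact absurd h hv
    have hspecA : μ ∈ spectrum ℂ Ac := mem_spectrum_of_eigenvector Ac μ v hv hAv
    exact (hβ hAne).2 ⟨μ, hspecA, hμne, rfl⟩
  · -- then μ = β
    have : ((β:ℂ) - μ) • (Pc *ᵥ v) = 0 := by
      rw [sub_smul, hPv, sub_self]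
    rcases smul_eq_zero.1 this with h | h
    · have : (β:ℂ) = μ := by rwa [sub_eq_zero] at h
      rw [← this]
      simp
    · exact absurd h hPvz

end XiAux

/-- Quantitative convergence of `ξ(t)x = (exp(-tA) - exp(-t(A+B)))x` to `Px`, where
`A` is almost-positively stable, `A+B` is positively stable, `P` is the projection onto
`ker A` along the generalized eigenspaces of nonzero eigenvalues, `α` is the minimal real
part of the eigenvalues of `A+B` and `β` the minimal real part of the nonzero eigenvalues
of `A` (with `β = 0` if `A = 0`). -/
theorem xi_convergence_rate {d : ℕ} (A B P : Matrix (Fin d) (Fin d) ℝ)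
    (hspec : ∀ μ ∈ spectrum ℂ (A.map Complex.ofReal), μ = 0 ∨ 0 < μ.re)
    (hkerstab : ∀ x : Fin d → ℝ, A *ᵥ (A *ᵥ x) = 0 → A *ᵥ x = 0)
    (hAB : ∀ μ ∈ spectrum ℂ ((A + B).map Complex.ofReal), 0 < μ.re)
    (hP1 : P * P = P) (hP2 : A * P = 0) (hP3 : P * A = 0)
    (hP4 : ∀ x : Fin d → ℝ, A *ᵥ x = 0 → P *ᵥ x = x)
    (α β : ℝ)
    (hα : IsLeast {r : ℝ | ∃ μ ∈ spectrum ℂ ((A + B).map Complex.ofReal), μ.re = r} α)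
    (hβ₀ : A = 0 → β = 0)
    (hβ : A ≠ 0 →
      IsLeast {r : ℝ | ∃ μ ∈ spectrum ℂ (A.map Complex.ofReal), μ ≠ 0 ∧ μ.re = r} β) :
    ∃ c₁ > (0 : ℝ), ∃ c₂ > (0 : ℝ), ∃ n₁ n₂ : ℕ,
      ∀ x : Fin d → ℝ, ∀ t : ℝ, 0 ≤ t →
        ‖(NormedSpace.exp (-(t • A)) - NormedSpace.exp (-(t • (A + B)))) *ᵥ x - P *ᵥ x‖ ≤
          c₂ * (1 + t ^ n₂) * Real.exp (-(β * t)) * ‖x - P *ᵥ x‖ +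
          c₁ * (1 + t ^ n₁) * Real.exp (-(α * t)) * ‖x‖ := by
  obtain ⟨c₁, hc₁, hb₁⟩ := exp_decay_real (A + B) α
    (fun μ hμ => hα.2 ⟨μ, hμ, rfl⟩)
  obtain ⟨c₂, hc₂, hb₂⟩ := exp_decay_real (A + β • P) β
    (spectrum_AP_bound A P hP1 hP3 hP4 β hβ₀ hβ)
  refine ⟨c₁, hc₁, c₂, hc₂, d, d, fun x t ht => ?_⟩
  -- exp(-(t•A)) fixes P x
  have key1 : NormedSpace.exp (-(t • A)) *ᵥ (P *ᵥ x) = P *ᵥ x := by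
    apply exp_mulVec_fix
    rw [Matrix.neg_mulVec, Matrix.smul_mulVec, Matrix.mulVec_mulVec, hP2,
      Matrix.zero_mulVec, smul_zero, neg_zero]
  -- exp(-(t•A)) agrees with exp(-(t•(A+βP))) on x - P x
  have key2 : NormedSpace.exp (-(t • A)) *ᵥ (x - P *ᵥ x) = NormedSpace.exp (-(t • (A + β • P))) *ᵥ (x - P *ᵥ x) := by
    have hc : Commute (-(t • A)) (-(t • (β • P))) := by
      have h1 : (t • A) * (t • (β • P)) = 0 := by
        rw [Matrix.smul_mul, Matrix.mul_smul, Matrix.mul_smul, hP2]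
        simp
      have h2 : (t • (β • P)) * (t • A) = 0 := by
        rw [Matrix.smul_mul, Matrix.smul_mul, Matrix.mul_smul, hP3]
        simp
      show _ * _ = _ * _
      rw [neg_mul_neg, neg_mul_neg, h1, h2]
    have hsplit : -(t • (A + β • P)) = -(t • A) + -(t • (β • P)) := by
      rw [smul_add, neg_add]
    have hPz : P *ᵥ (x - P *ᵥ x) = 0 := by
      rw [Matrix.mulVec_sub, Matrix.mulVec_mulVec, hP1, sub_self]
    have hfix : NormedSpace.exp (-(t • (β • P))) *ᵥ (x - P *ᵥ x) = x - P *ᵥ x := by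
      apply exp_mulVec_fix
      rw [Matrix.neg_mulVec, Matrix.smul_mulVec, Matrix.smul_mulVec, hPz]
      simp
    rw [hsplit, show NormedSpace.exp (-(t • A) + -(t • (β • P))) =
        NormedSpace.exp (-(t • A)) * NormedSpace.exp (-(t • (β • P))) from exp_add_of_commute hc,
      ← Matrix.mulVec_mulVec, hfix]
  -- decompose
  have hdecomp : (NormedSpace.exp (-(t • A)) - NormedSpace.exp (-(t • (A + B)))) *ᵥ x - P *ᵥ x =
      NormedSpace.exp (-(t • (A + β • P))) *ᵥ (x - P *ᵥ x) - NormedSpace.exp (-(t • (A + B))) *ᵥ x := by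
    rw [← key2, Matrix.mulVec_sub, key1, Matrix.sub_mulVec]
    abel
  rw [hdecomp]
  calc ‖NormedSpace.exp (-(t • (A + β • P))) *ᵥ (x - P *ᵥ x) - NormedSpace.exp (-(t • (A + B))) *ᵥ x‖
      ≤ ‖NormedSpace.exp (-(t • (A + β • P))) *ᵥ (x - P *ᵥ x)‖ + ‖NormedSpace.exp (-(t • (A + B))) *ᵥ x‖ :=
        norm_sub_le _ _
    _ ≤ c₂ * (1 + t ^ d) * Real.exp (-(β * t)) * ‖x - P *ᵥ x‖ +
        c₁ * (1 + t ^ d) * Real.exp (-(α * t)) * ‖x‖ :=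
        add_le_add (hb₂ t ht _) (hb₁ t ht x)
end
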